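/- arXiv:2309.05902 — 4 statements merged into one kernel-verified Lean document; each statement's English description precedes it below -/
import Mathlib

section
/- For every natural number n ≥ 1, in the standard Game of Cycles, the line sub-game of type 3 — a path of n unmarked edges with one pre-marked directed edge attached at the left end and directed away from the path (•←•—•⋯•—•) — has Grundy value n − 1. -/
/-- Edge state on a path/cycle: `none` = unmarked, `some true` = directed "rightwards"
(from vertex `i` to vertex `i+1`), `some false` = directed "leftwards". -/
abbrev EdgeState := Option Bool

/-- Minimum excludant of a set of naturals: the least natural number not in the set. -/
noncomputable def mex (S : Set ℕ) : ℕ := sInf {n | n ∉ S}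

/-- Generic fueled Grundy value of an impartial game with move function `moves`
(the fuel always dominates the number of remaining moves in our uses, so this
computes the Sprague–Grundy value). -/
noncomputable def grundyAux {α : Type} (moves : α → Set α) : ℕ → α → ℕ
  | 0, _ => 0
  | k+1, x => mex ((grundyAux moves k) '' (moves x))

/-- A line position (list of edge states, vertex `j+1` lying between edges `j` and
`j+1`) is admissible: no non-exempt vertex is a sink (all incident edges marked and
directed toward it) and, unless `sourceAllowed`, no non-exempt vertex is a source
(all incident edges marked and directed away from it).  The left endpoint (vertex
`0`) is exempt iff `exL`, the right endpoint iff `exR`. -/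
def LineOK (sourceAllowed exL exR : Bool) (es : List EdgeState) : Prop :=
  (∀ j : ℕ, ¬ (es[j]? = some (some true) ∧ es[j+1]? = some (some false))) ∧
  (sourceAllowed = true ∨
    ∀ j : ℕ, ¬ (es[j]? = some (some false) ∧ es[j+1]? = some (some true))) ∧
  (exL = true ∨ (es.head? ≠ some (some false) ∧
    (sourceAllowed = true ∨ es.head? ≠ some (some true)))) ∧
  (exR = true ∨ (es.getLast? ≠ some (some true) ∧
    (sourceAllowed = true ∨ es.getLast? ≠ some (some false))))

/-- A legal move on a line position marks an unmarked edge with one of the two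
directions so that the resulting position is admissible. -/
def lineMoves (sourceAllowed exL exR : Bool) (es : List EdgeState) :
    Set (List EdgeState) :=
  { es' | ∃ (j : ℕ) (d : Bool), es[j]? = some none ∧ es' = es.set j (some d) ∧
      LineOK sourceAllowed exL exR es' }

/-- Grundy value (Nimber) of the line (sub-)game with `n` unmarked edges.
`l` (resp. `r`) is an optional pre-marked directed edge attached at the left
(resp. right) end of the path (`some true` pointing rightwards, `some false`
pointing leftwards); the outer endpoint of a pre-marked edge is exempt from the
no-sink (and, when sources are disallowed, no-source) restriction.
`sourceAllowed = false` gives the standard Game of Cycles, `sourceAllowed = true`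
gives Cycles with Sources. -/
noncomputable def lineNim (sourceAllowed : Bool) (l r : Option Bool) (n : ℕ) : ℕ :=
  let es : List EdgeState :=
    (l.map some).toList ++ List.replicate n none ++ (r.map some).toList
  grundyAux (lineMoves sourceAllowed l.isSome r.isSome) es.length es


namespace LP


lemma mex_eq {S : Set ℕ} {a : ℕ} (h1 : ∀ m < a, m ∈ S) (h2 : a ∉ S) : mex S = a := by
  refine le_antisymm (Nat.sInf_le h2) (le_csInf ⟨a, h2⟩ ?_)
  intro b hb
  by_contra h
  exact hb (h1 b (by omega))

def compat : EdgeState → EdgeState → Prop := fun x y =>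
  ¬(x = some true ∧ y = some false) ∧ ¬(x = some false ∧ y = some true)

lemma compat_none_left {y} : compat none y := by simp [compat]
lemma compat_none_right {x} : compat x none := by simp [compat]
lemma compat_some {a b : Bool} : compat (some a) (some b) ↔ a = b := by
  cases a <;> cases b <;> simp [compat]

def mk (P : List EdgeState) (t : ℕ) : List EdgeState :=
  some false :: (P ++ List.replicate (t+1) none)

def cnt (P : List EdgeState) : ℕ := P.count none
def ld (P : List EdgeState) : Bool := ((P.getLast?).bind id).getD false
def pbit (P : List EdgeState) : ℕ := (cnt P + (if ld P then 1 else 0)) % 2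
def fval (t q : ℕ) : ℕ := if q % 2 = 0 then t else (if t % 2 = 0 then t+1 else t-1)
def Marked (P : List EdgeState) : Prop := P = [] ∨ ∃ d, P.getLast? = some (some d)

lemma set_replicate (i m : ℕ) (h : i < m) (x : EdgeState) :
    (List.replicate m (none : EdgeState)).set i x =
      List.replicate i none ++ x :: List.replicate (m-i-1) none := by
  induction i generalizing m with
  | zero => cases m with
    | zero => omega
    | succ k => simp [List.replicate_succ]
  | succ i ih => cases m with
    | zero => omega
    | succ k =>
      rw [List.replicate_succ, List.set_cons_succ, ih k (by omega)]
      simp only [List.replicate_succ, List.cons_append, Nat.succ_sub_succ]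

lemma chain'_replicate_none (m : ℕ) :
    List.IsChain compat (List.replicate m (none : EdgeState)) := by
  induction m with
  | zero => simp
  | succ k ih =>
    rw [List.replicate_succ]
    exact List.IsChain.cons ih (fun y _ => compat_none_left)

lemma getLast?_replicate_none (t : ℕ) :
    (List.replicate (t+1) (none : EdgeState)).getLast? = some none := by
  induction t with
  | zero => rfl
  | succ k ih =>
    rw [List.replicate_succ, List.replicate_succ, List.getLast?_cons_cons,
      ← List.replicate_succ]
    exact ih

lemma getLast?_mk (P : List EdgeState) (t : ℕ) : (mk P t).getLast? = some none := by
  show ((some false :: P) ++ _).getLast? = _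
  rw [List.getLast?_append, getLast?_replicate_none]
  rfl


lemma pair_iff (x y : EdgeState) (es : List EdgeState) :
    (∀ j, ¬ (es[j]? = some x ∧ es[(j+1)]? = some y)) ↔
    (∀ i (h : i < es.length - 1),
      ¬(es.get ⟨i, by omega⟩ = x ∧ es.get ⟨i+1, by omega⟩ = y)) := by
  constructor
  · intro H i h hc
    exact H i ⟨List.getElem?_eq_some_iff.2 ⟨_, hc.1⟩, List.getElem?_eq_some_iff.2 ⟨_, hc.2⟩⟩
  · intro H j hc
    obtain ⟨h1, e1⟩ := List.getElem?_eq_some_iff.1 hc.1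
    obtain ⟨h2, e2⟩ := List.getElem?_eq_some_iff.1 hc.2
    exact H j (by omega) ⟨e1, e2⟩

lemma lineOK_iff (es : List EdgeState) :
    LineOK false true false es ↔
      List.IsChain compat es ∧ es.getLast? ≠ some (some true) ∧
        es.getLast? ≠ some (some false) := by
  rw [LineOK]
  simp only [Bool.false_eq_true, false_or, true_or, true_and]
  rw [pair_iff, pair_iff, List.isChain_iff_getElem]
  constructor
  · rintro ⟨h1, h2, h3⟩
    refine ⟨fun i h => ?_, h3⟩
    have H1 := h1 i (by omega); have H2 := h2 i (by omega)
    exact ⟨fun hc => H1 ⟨hc.1, hc.2⟩, fun hc => H2 ⟨hc.1, hc.2⟩⟩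
  · rintro ⟨h1, h3⟩
    exact ⟨fun i h hc => (h1 i (by omega)).1 hc, fun i h hc => (h1 i (by omega)).2 hc, h3⟩


lemma cnt_set {P : List EdgeState} {j : ℕ} (c : Bool) (h : P[j]? = some none) :
    cnt (P.set j (some c)) + 1 = cnt P := by
  induction P generalizing j with
  | nil => simp at h
  | cons a Q ih =>
    cases j with
    | zero =>
      simp only [List.getElem?_cons_zero] at h
      injection h with h; subst h
      simp [cnt, List.count_cons]
    | succ j =>
      simp only [List.getElem?_cons_succ] at h
      have := ih h
      cases a <;> simp_all [cnt, List.count_cons] <;> omega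

lemma getLast?_set {P : List EdgeState} {j : ℕ} {c : Bool} {d : Bool}
    (hL : P.getLast? = some (some d)) (h : P[j]? = some none) :
    (P.set j (some c)).getLast? = some (some d) := by
  have hlen : 0 < P.length := by
    cases P
    · simp at hL
    · simp
  have hj : j ≠ P.length - 1 := by
    intro hj
    rw [List.getLast?_eq_getElem?, ← hj, h] at hL
    simp at hL
  rw [List.getLast?_eq_getElem?, List.length_set,
    List.getElem?_set_ne hj]
  rw [List.getLast?_eq_getElem?] at hL
  exact hL

lemma marked_set {P : List EdgeState} {j : ℕ} {c : Bool} (hM : Marked P)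
    (h : P[j]? = some none) : Marked (P.set j (some c)) := by
  rcases hM with rfl | ⟨d, hd⟩
  · simp at h
  · exact Or.inr ⟨d, getLast?_set hd h⟩

lemma ld_set {P : List EdgeState} {j : ℕ} {c : Bool} (hM : Marked P)
    (h : P[j]? = some none) : ld (P.set j (some c)) = ld P := by
  rcases hM with rfl | ⟨d, hd⟩
  · simp at h
  · rw [ld, ld, hd, getLast?_set hd h]

lemma cnt_le (P : List EdgeState) : cnt P ≤ P.length := List.count_le_length

lemma cnt_append (P Q : List EdgeState) : cnt (P ++ Q) = cnt P + cnt Q :=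
  List.count_append ..

lemma cnt_replicate (i : ℕ) : cnt (List.replicate i (none : EdgeState)) = i := by
  simp [cnt, List.count_replicate]

lemma cnt_single (c : Bool) : cnt [some c] = 0 := by simp [cnt]

lemma ld_concat (P : List EdgeState) (c : Bool) : ld (P ++ [some c]) = c := by
  rw [ld, List.getLast?_concat]; rfl




def ldg (dir : Bool) (P : List EdgeState) : Bool := ((P.getLast?).bind id).getD dir
def pg (dir : Bool) (P : List EdgeState) : ℕ :=
  (cnt P + (if ldg dir P ≠ dir then 1 else 0)) % 2

lemma pbit_eq_pg (P : List EdgeState) : pbit P = pg false P := by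
  rw [pbit, pg]
  congr 1
  rcases h : ldg false P with _|_ <;> simp [ld, ldg] at h ⊢ <;> simp [h]

def IntMove (P : List EdgeState) : Set (List EdgeState) :=
  { Q | ∃ j c, P[j]? = some none ∧ Q = P.set j (some c) ∧
        List.IsChain compat (some false :: Q) }

lemma getLast?_consP {P : List EdgeState} (hM : Marked P) :
    (some false :: P).getLast? = some (some (ld P)) := by
  rcases hM with rfl | ⟨d, hd⟩
  · rfl
  · show ([some false] ++ P).getLast? = _
    rw [List.getLast?_append, hd]
    simp [ld, hd]

lemma chain'_trail {P : List EdgeState} {i : ℕ} {c : Bool} (hM : Marked P)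
    (hC : List.IsChain compat (some false :: P)) (hc : i = 0 → c = ld P) :
    List.IsChain compat (some false :: (P ++ List.replicate i none ++ [some c])) := by
  have h1 : List.IsChain compat ((some false :: P) ++ List.replicate i none) := by
    rw [List.isChain_append]
    refine ⟨hC, chain'_replicate_none _, fun x hx y hy => ?_⟩
    rw [List.head?_replicate] at hy
    split at hy
    · simp at hy
    · rw [Option.mem_def] at hy
      injection hy with hy
      subst hy
      exact compat_none_right
  have goal : List.IsChain compat
      (((some false :: P) ++ List.replicate i none) ++ [some c]) := by
    rw [List.isChain_append]
    refine ⟨h1, List.isChain_singleton _, fun x hx y hy => ?_⟩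
    rw [Option.mem_def] at hx hy
    injection hy with hy
    subst hy
    rw [List.getLast?_append] at hx
    rcases i with _ | i
    · simp only [List.replicate, List.getLast?_nil, Option.none_or] at hx
      rw [getLast?_consP hM] at hx
      injection hx with hx
      subst hx
      rw [compat_some]
      exact (hc rfl).symm
    · rw [getLast?_replicate_none] at hx
      injection hx with hx
      subst hx
      exact compat_none_left
  simpa using goal

lemma chain'_mk {P : List EdgeState} {t : ℕ}
    (h : List.IsChain compat (some false :: P)) : List.IsChain compat (mk P t) := by
  show List.IsChain compat ((some false :: P) ++ _)
  rw [List.isChain_append]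
  refine ⟨h, chain'_replicate_none _, fun x hx y hy => ?_⟩
  rw [List.head?_replicate] at hy
  split at hy
  · simp at hy
  · rw [Option.mem_def] at hy
    injection hy with hy
    subst hy
    exact compat_none_right

lemma lineOK_mk {P : List EdgeState} {t : ℕ}
    (h : List.IsChain compat (some false :: P)) : LineOK false true false (mk P t) := by
  rw [lineOK_iff]
  refine ⟨chain'_mk h, ?_, ?_⟩ <;> rw [getLast?_mk] <;> simp

lemma set_mk_int {P : List EdgeState} {t j : ℕ} (hj : j < P.length) (c : Bool) :
    (mk P t).set (j+1) (some c) = mk (P.set j (some c)) t := by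
  rw [mk, mk, List.set_cons_succ, List.set_append]
  simp [hj]

lemma set_mk_trail {P : List EdgeState} {t i : ℕ} (hi : i < t) (c : Bool) :
    (mk P t).set (P.length + i + 1) (some c) =
      mk (P ++ List.replicate i none ++ [some c]) (t-1-i) := by
  rw [mk, mk, List.set_cons_succ, List.set_append]
  have h1 : ¬ (P.length + i < P.length) := by omega
  simp only [h1, if_false]
  have h2 : P.length + i - P.length = i := by omega
  rw [h2, set_replicate i (t+1) (by omega) (some c)]
  have h3 : t + 1 - i - 1 = (t - 1 - i) + 1 := by omega
  rw [h3]
  simp [List.append_assoc]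

lemma get?_mk_int {P : List EdgeState} {t j : ℕ} (hj : j < P.length) :
    (mk P t)[(j+1)]? = P[j]? := by
  show (P ++ _)[j]? = _
  rw [List.getElem?_append_left hj]

lemma get?_mk_trail {P : List EdgeState} {t i : ℕ} (hi : i < t + 1) :
    (mk P t)[(P.length + i + 1)]? = some none := by
  show (P ++ _)[(P.length + i)]? = _
  rw [List.getElem?_append_right (by omega)]
  have h2 : P.length + i - P.length = i := by omega
  rw [h2, List.getElem?_replicate]
  simp [hi]

lemma moves_iff {P : List EdgeState} {t : ℕ} (hM : Marked P)
    (hC : List.IsChain compat (some false :: P)) (es' : List EdgeState) :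
    es' ∈ lineMoves false true false (mk P t) ↔
      ((∃ Q ∈ IntMove P, es' = mk Q t) ∨
       (∃ i c, i < t ∧ (i = 0 → c = ld P) ∧
         es' = mk (P ++ List.replicate i none ++ [some c]) (t-1-i))) := by
  constructor
  · rintro ⟨j, d, hget, hset, hok⟩
    match j with
    | 0 => exact absurd hget (by rw [mk]; simp)
    | (j' + 1) =>
      by_cases hj : j' < P.length
      · -- interior
        rw [get?_mk_int hj] at hget
        left
        refine ⟨P.set j' (some d), ⟨j', d, hget, rfl, ?_⟩, by rw [hset, set_mk_int hj]⟩
        rw [hset, set_mk_int hj] at hok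
        rw [lineOK_iff] at hok
        have := hok.1
        rw [mk] at this
        exact (List.isChain_append.1 (by exact this)).1
      · -- trailing region
        push_neg at hj
        obtain ⟨i, hj'⟩ : ∃ i, j' = P.length + i := ⟨j' - P.length, by omega⟩
        have hget2 : (List.replicate (t+1) (none : EdgeState))[i]? = some none := by
          have : (mk P t)[(j'+1)]? = (P ++ List.replicate (t+1) none)[j']? := rfl
          rw [this] at hget
          rw [List.getElem?_append_right hj] at hget
          have h2 : j' - P.length = i := by omega
          rw [h2] at hget
          exact hget
        have hit : i < t + 1 := by
          rw [List.getElem?_replicate] at hget2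
          by_contra h
          simp [h] at hget2
        have hit' : i < t := by
          by_contra h
          have hieq : i = t := by omega
          -- es' ends with some d, contradicting LineOK
          have : es' = (some false :: (P ++ List.replicate t none)) ++ [some d] := by
            rw [hset, hj', hieq, mk, List.set_cons_succ, List.set_append]
            have h1 : ¬ (P.length + t < P.length) := by omega
            simp only [h1, if_false]
            have h2 : P.length + t - P.length = t := by omega
            rw [h2, set_replicate t (t+1) (by omega) (some d)]
            simp [List.append_assoc]
          rw [lineOK_iff, this, List.getLast?_concat] at hok
          rcases d with _|_
          · exact hok.2.2 rfl
          · exact hok.2.1 rfl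
        right
        refine ⟨i, d, hit', ?_, by rw [hset, hj', set_mk_trail hit']⟩
        intro hi0
        subst hi0
        rw [hset, hj', set_mk_trail hit'] at hok
        rw [lineOK_iff] at hok
        have hch := hok.1
        rw [mk] at hch
        have hch' : List.IsChain compat
            ((some false :: P) ++ (some d :: List.replicate (t - 1 - 0 + 1) none)) := by
          simpa using hch
        have hb := (List.isChain_append.1 hch').2.2
        have := hb (some (ld P)) (by rw [getLast?_consP hM]; rfl) (some d) rfl
        exact (compat_some.1 this).symm
  · rintro (⟨Q, ⟨j, c, hj, rfl, hch⟩, rfl⟩ | ⟨i, c, hi, hc0, rfl⟩)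
    · have hjl : j < P.length := by
        obtain ⟨h, _⟩ := List.getElem?_eq_some_iff.1 hj
        exact h
      exact ⟨j+1, c, by rw [get?_mk_int hjl]; exact hj, (set_mk_int hjl c).symm,
        lineOK_mk hch⟩
    · exact ⟨P.length + i + 1, c, get?_mk_trail (by omega),
        (set_mk_trail hi c).symm, lineOK_mk (chain'_trail hM hC hc0)⟩

lemma pg_nil (dir : Bool) : pg dir [] = 0 := by simp [pg, ldg, cnt]

lemma int_exists : ∀ (N : ℕ) (P : List EdgeState) (dir : Bool), P.length ≤ N →
    List.IsChain compat (some dir :: P) → Marked P → pg dir P = 1 →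
    ∃ j c, P[j]? = some none ∧ List.IsChain compat (some dir :: P.set j (some c)) := by
  intro N
  induction N with
  | zero =>
    intro P dir hlen _ _ hp
    have : P = [] := List.length_eq_zero_iff.1 (by omega)
    subst this
    rw [pg_nil] at hp
    omega
  | succ N ih =>
    intro P dir hlen hC hM hp
    match P with
    | [] => rw [pg_nil] at hp; omega
    | (some d) :: Q =>
      have hdd : dir = d := compat_some.1 (List.isChain_cons_cons.1 hC).1
      subst hdd
      have hMQ : Marked Q := by
        cases Q with
        | nil => exact Or.inl rfl
        | cons b R =>
          rcases hM with h | ⟨e, he⟩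
          · simp at h
          · exact Or.inr ⟨e, by rwa [List.getLast?_cons_cons] at he⟩
      have hpg : pg dir Q = 1 := by
        cases Q with
        | nil =>
          exfalso
          have : pg dir [some dir] = 0 := by simp [pg, ldg, cnt]
          rw [this] at hp; omega
        | cons b R =>
          rcases hMQ with h | ⟨e, he⟩
          · simp at h
          · simp only [pg] at hp ⊢
            have h1 : cnt (some dir :: b :: R) = cnt (b :: R) := by
              simp [cnt, List.count_cons]
            have h2 : ldg dir (some dir :: b :: R) = ldg dir (b :: R) := by
              rw [ldg, ldg, List.getLast?_cons_cons]
            rw [h1, h2] at hp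
            exact hp
      have hCQ : List.IsChain compat (some dir :: Q) := (List.isChain_cons_cons.1 hC).2
      obtain ⟨j, c, hj, hc⟩ := ih Q dir (by simp at hlen; omega) hCQ hMQ hpg
      refine ⟨j+1, c, hj, ?_⟩
      rw [List.set_cons_succ]
      exact List.isChain_cons_cons.2 ⟨(List.isChain_cons_cons.1 hC).1, hc⟩
    | none :: [] =>
      rcases hM with h | ⟨e, he⟩
      · simp at h
      · simp at he
    | none :: none :: R =>
      refine ⟨0, dir, rfl, ?_⟩
      rw [List.set_cons_zero]
      refine List.isChain_cons_cons.2 ⟨compat_some.2 rfl, List.isChain_cons_cons.2 ⟨compat_none_right, ?_⟩⟩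
      exact (List.isChain_cons_cons.1 (List.isChain_cons_cons.1 hC).2).2
    | none :: (some d) :: R =>
      by_cases hd : d = dir
      · refine ⟨0, dir, rfl, ?_⟩
        rw [List.set_cons_zero]
        refine List.isChain_cons_cons.2 ⟨compat_some.2 rfl, List.isChain_cons_cons.2 ⟨compat_some.2 hd.symm, ?_⟩⟩
        exact (List.isChain_cons_cons.1 (List.isChain_cons_cons.1 hC).2).2
      · have hCR : List.IsChain compat (some d :: R) :=
          (List.isChain_cons_cons.1 (List.isChain_cons_cons.1 hC).2).2
        have hMR : Marked R := by
          cases R with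
          | nil => exact Or.inl rfl
          | cons b S =>
            rcases hM with h | ⟨e, he⟩
            · simp at h
            · exact Or.inr ⟨e, by rwa [List.getLast?_cons_cons, List.getLast?_cons_cons] at he⟩
        have hpR : pg d R = 1 := by
          cases R with
          | nil =>
            exfalso
            have h0 : pg dir [none, some d] = 0 := by
              have : ldg dir [none, some d] = d := by simp [ldg]
              rw [pg, this]
              have : cnt [none, some d] = 1 := by simp [cnt]
              rw [this]
              have hne : d ≠ dir := hd
              simp [hne]
            rw [h0] at hp; omega
          | cons b S =>
            rcases hMR with h | ⟨e, he⟩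
            · simp at h
            · simp only [pg] at hp ⊢
              have h1 : cnt (none :: some d :: b :: S) = cnt (b :: S) + 1 := by
                simp [cnt, List.count_cons]
              have h2 : ldg dir (none :: some d :: b :: S) = e := by
                rw [ldg, List.getLast?_cons_cons, List.getLast?_cons_cons, he]; rfl
              have h3 : ldg d (b :: S) = e := by rw [ldg, he]; rfl
              rw [h1, h2] at hp
              rw [h3]
              rcases e with _|_ <;> rcases d with _|_ <;> rcases dir with _|_ <;>
                simp_all <;> omega
        obtain ⟨j, c, hj, hc⟩ := ih R d (by simp at hlen; omega) hCR hMR hpR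
        refine ⟨j+2, c, hj, ?_⟩
        rw [List.set_cons_succ, List.set_cons_succ]
        exact List.isChain_cons_cons.2 ⟨compat_none_right,
          List.isChain_cons_cons.2 ⟨compat_none_left, hc⟩⟩

lemma choose_c (a r : ℕ) : ∃ c : Bool, (a + (if c then 1 else 0)) % 2 = r % 2 := by
  by_cases h : a % 2 = r % 2
  · exact ⟨false, by simpa using h⟩
  · exact ⟨true, by simp only [if_true]; omega⟩

lemma main : ∀ (k : ℕ) (P : List EdgeState) (t : ℕ), Marked P →
    List.IsChain compat (some false :: P) → cnt P + t + 1 ≤ k →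
    grundyAux (lineMoves false true false) k (mk P t) = fval t (pbit P) := by
  intro k
  induction k with
  | zero => intro P t _ _ h; omega
  | succ k ih =>
    intro P t hM hC hk
    show mex _ = _
    set b : ℕ := (if ld P then 1 else 0) with hbdef
    have hble : b ≤ 1 := by rw [hbdef]; split <;> omega
    have hple : pbit P = (cnt P + b) % 2 := rfl
    apply mex_eq
    · -- every m < fval t (pbit P) is an option value
      intro m hm
      have hmt : m ≤ t := by
        have : fval t (pbit P) ≤ t + 1 := by simp only [fval]; split_ifs <;> omega
        omega
      rcases eq_or_lt_of_le hmt with hmeq | hmlt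
      · -- m = t : need pbit P = 1, use interior move
        subst hmeq
        have hp1 : pbit P = 1 := by
          by_contra h
          have h0 : pbit P = 0 := by omega
          rw [h0] at hm
          simp [fval] at hm
        obtain ⟨j, c, hj, hch⟩ := int_exists P.length P false le_rfl hC hM
          (by rw [← pbit_eq_pg]; exact hp1)
        refine ⟨mk (P.set j (some c)) m,
          (moves_iff hM hC _).2 (Or.inl ⟨_, ⟨j, c, hj, rfl, hch⟩, rfl⟩), ?_⟩
        have hcnt := cnt_set c hj
        rw [ih _ _ (marked_set hM hj) hch (by omega)]
        have hld := ld_set (c := c) hM hj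
        have h1 : pbit (P.set j (some c)) = (cnt (P.set j (some c)) + b) % 2 := by
          rw [pbit, hld, hbdef]
        have h0 : pbit (P.set j (some c)) = 0 := by omega
        rw [h0]
        simp [fval]
      · -- m < t : trailing moves
        by_cases hcase : m + 1 = t
        · by_cases hp : pbit P = 0
          · -- i = 0, c = ld P
            refine ⟨mk (P ++ List.replicate 0 none ++ [some (ld P)]) (t-1-0),
              (moves_iff hM hC _).2 (Or.inr ⟨0, ld P, by omega, fun _ => rfl, rfl⟩), ?_⟩
            have hMa : Marked (P ++ List.replicate 0 none ++ [some (ld P)]) :=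
              Or.inr ⟨ld P, List.getLast?_concat⟩
            have hcha := chain'_trail (i := 0) hM hC (fun _ => rfl)
            have hcnt' : cnt (P ++ List.replicate 0 none ++ [some (ld P)]) = cnt P := by
              rw [cnt_append, cnt_append, cnt_replicate, cnt_single]
              omega
            have hld' : ld (P ++ List.replicate 0 none ++ [some (ld P)]) = ld P :=
              ld_concat _ _
            rw [ih _ _ hMa hcha (by omega)]
            have hpb : pbit (P ++ List.replicate 0 none ++ [some (ld P)]) = 0 := by
              rw [pbit, hld', hcnt', ← hbdef]
              omega
            rw [hpb]
            simp only [fval, Nat.zero_mod, if_true]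
            omega
          · -- pbit P = 1, t even, i = 1
            have hp1 : pbit P = 1 := by omega
            have ht2 : t % 2 = 0 := by
              by_contra h
              have ht1 : t % 2 = 1 := by omega
              rw [hp1] at hm
              have : fval t 1 = t - 1 := by
                simp only [fval]
                rw [if_neg (by omega), if_neg (by omega)]
              rw [this] at hm
              omega
            have ht : 2 ≤ t := by omega
            obtain ⟨c, hc⟩ := choose_c (cnt P + 1) 1
            refine ⟨mk (P ++ List.replicate 1 none ++ [some c]) (t-1-1),
              (moves_iff hM hC _).2 (Or.inr ⟨1, c, by omega,
                fun h => absurd h (by omega), rfl⟩), ?_⟩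
            have hMa : Marked (P ++ List.replicate 1 none ++ [some c]) :=
              Or.inr ⟨c, List.getLast?_concat⟩
            have hcha := chain'_trail (i := 1) (c := c) hM hC
              (fun h => absurd h (by omega))
            have hcnt' : cnt (P ++ List.replicate 1 none ++ [some c]) = cnt P + 1 := by
              rw [cnt_append, cnt_append, cnt_replicate, cnt_single]
            have hld' : ld (P ++ List.replicate 1 none ++ [some c]) = c :=
              ld_concat _ _
            rw [ih _ _ hMa hcha (by omega)]
            have hpb : pbit (P ++ List.replicate 1 none ++ [some c]) = 1 := by
              rw [pbit, hld', hcnt']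
              omega
            rw [hpb]
            have hfv : fval (t-1-1) 1 = t-1-1+1 := by
              simp only [fval]
              rw [if_neg (by omega), if_pos (by omega)]
            rw [hfv]
            omega
        · -- m + 1 < t : i = t-1-m ≥ 1, choose c to make parity even
          obtain ⟨c, hc⟩ := choose_c (cnt P + (t - 1 - m)) 0
          refine ⟨mk (P ++ List.replicate (t-1-m) none ++ [some c]) (t-1-(t-1-m)),
            (moves_iff hM hC _).2 (Or.inr ⟨t-1-m, c, by omega,
              fun h => absurd h (by omega), rfl⟩), ?_⟩
          have hMa : Marked (P ++ List.replicate (t-1-m) none ++ [some c]) :=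
            Or.inr ⟨c, List.getLast?_concat⟩
          have hcha := chain'_trail (i := t-1-m) (c := c) hM hC
            (fun h => absurd h (by omega))
          have hcnt' : cnt (P ++ List.replicate (t-1-m) none ++ [some c])
              = cnt P + (t-1-m) := by
            rw [cnt_append, cnt_append, cnt_replicate, cnt_single]
            omega
          have hld' : ld (P ++ List.replicate (t-1-m) none ++ [some c]) = c :=
            ld_concat _ _
          rw [ih _ _ hMa hcha (by omega)]
          have hpb : pbit (P ++ List.replicate (t-1-m) none ++ [some c]) = 0 := by
            rw [pbit, hld', hcnt']
            omega
          rw [hpb]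
          have hmm : t - 1 - (t-1-m) = m := by omega
          rw [hmm]
          simp [fval]
    · -- fval t (pbit P) is not an option value
      rintro ⟨es', hmem, heq⟩
      rcases (moves_iff hM hC es').1 hmem with ⟨Q, ⟨j, c, hj, rfl, hch⟩, rfl⟩ |
        ⟨i, c, hi, hc0, rfl⟩
      · have hcnt := cnt_set c hj
        rw [ih _ _ (marked_set hM hj) hch (by omega)] at heq
        have hld := ld_set (c := c) hM hj
        have h1 : pbit (P.set j (some c)) = (cnt (P.set j (some c)) + b) % 2 := by
          rw [pbit, hld, hbdef]
        simp only [fval] at heq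
        split_ifs at heq <;> omega
      · have hMa : Marked (P ++ List.replicate i none ++ [some c]) :=
          Or.inr ⟨c, List.getLast?_concat⟩
        have hcha := chain'_trail hM hC hc0
        have hcnt' : cnt (P ++ List.replicate i none ++ [some c]) = cnt P + i := by
          rw [cnt_append, cnt_append, cnt_replicate, cnt_single]
          omega
        have hld' : ld (P ++ List.replicate i none ++ [some c]) = c :=
          ld_concat _ _
        rw [ih _ _ hMa hcha (by omega)] at heq
        have hpb : pbit (P ++ List.replicate i none ++ [some c])
            = (cnt P + i + (if c then 1 else 0)) % 2 := by
          rw [pbit, hld', hcnt']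
        rw [hpb] at heq
        rcases Nat.eq_zero_or_pos i with hi0 | hipos
        · subst hi0
          have hcb : (if c then (1:ℕ) else 0) = b := by
            rw [hc0 rfl, hbdef]
          rw [hcb] at heq
          rw [← Nat.add_zero (cnt P)] at heq
          simp only [fval] at heq
          split_ifs at heq <;> omega
        · simp only [fval] at heq
          split_ifs at heq <;> omega

end LP

/-- For every `n ≥ 1`, the type-3 line sub-game of the standard
Game of Cycles (a pre-marked edge at the left end directed away from the path,
•←•—•⋯•—•) has Grundy value `n - 1`. -/
theorem line_type3_nimber_standard (n : ℕ) (hn : 1 ≤ n) :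
    lineNim false (some false) none n = n - 1 := by
  obtain ⟨m, rfl⟩ : ∃ m, n = m + 1 := ⟨n - 1, by omega⟩
  have h := LP.main (m + 2) [] m (Or.inl rfl) (by simp) (by simp [LP.cnt])
  rw [LP.mk, List.nil_append] at h
  have hp : LP.pbit [] = 0 := by simp [LP.pbit, LP.cnt, LP.ld]
  rw [hp] at h
  have hf : LP.fval m 0 = m := by simp [LP.fval]
  rw [hf] at h
  simp only [lineNim, Option.map_some, Option.map_none, Option.toList_some, Option.toList_none,
    Option.isSome_some, Option.isSome_none, List.append_nil, List.singleton_append]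
  have hl : (some false :: List.replicate (m+1) (none : EdgeState)).length = m + 2 := by
    simp
  rw [hl]
  simpa using h
end

section
/- For every natural number n ≥ 1, in the standard Game of Cycles, the line sub-games of type 5 — a path of n unmarked edges with pre-marked directed edges at both ends both pointing into the path (•→•—•⋯•—•←•) — and of type 6 — pre-marked directed edges at both ends both pointing away from the path (•←•—•⋯•—•→•) — each have Grundy value 1 if n is even and 0 if n is odd. -/
namespace LineProof

/-- Two adjacent edge states are compatible: no sink (`→←` i.e. `true,false`)
and no source (`←→` i.e. `false,true`). -/
def Rel (x y : EdgeState) : Prop :=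
  ¬(x = some true ∧ y = some false) ∧ ¬(x = some false ∧ y = some true)

lemma rel_none_left (y : EdgeState) : Rel none y := by simp [Rel]
lemma rel_none_right (x : EdgeState) : Rel x none := by simp [Rel]
lemma rel_refl (p : Bool) : Rel (some p) (some p) := by cases p <;> simp [Rel]
lemma rel_some {p q : Bool} (h : Rel (some p) (some q)) : p = q := by
  cases p <;> cases q <;> simp_all [Rel]
lemma not_rel_some_right {x : EdgeState} {a : Bool} (h : ¬ Rel (some a) x) :
    x = some (!a) := by
  cases x with
  | none => exact absurd (rel_none_right _) h
  | some c => cases a <;> cases c <;> simp_all [Rel]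

lemma chain'_iff (l : List EdgeState) :
    l.Chain' Rel ↔ ∀ j x y, l[j]? = some x → l[j+1]? = some y → Rel x y := by
  rw [show l.Chain' Rel ↔ l.IsChain Rel from Iff.rfl, List.isChain_iff_getElem]
  constructor
  · intro h j x y hx hy
    rw [List.getElem?_eq_some_iff] at hx hy
    obtain ⟨h1, rfl⟩ := hx; obtain ⟨h2, rfl⟩ := hy
    exact h j (by omega)
  · intro h i hi
    exact h i _ _ (List.getElem?_eq_getElem (by omega)) (List.getElem?_eq_getElem (by omega))

lemma lineOK_iff (es : List EdgeState) :
    LineOK false true true es ↔ es.Chain' Rel := by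
  rw [chain'_iff]
  constructor
  · rintro ⟨h1, h2, -, -⟩ j x y hx hy
    rcases h2 with h2 | h2
    · exact absurd h2 (by simp)
    refine ⟨?_, ?_⟩
    · rintro ⟨rfl, rfl⟩; exact h1 j ⟨hx, hy⟩
    · rintro ⟨rfl, rfl⟩; exact h2 j ⟨hx, hy⟩
  · intro h
    refine ⟨?_, Or.inr ?_, Or.inl rfl, Or.inl rfl⟩
    · rintro j ⟨hx, hy⟩; exact (h j _ _ hx hy).1 ⟨rfl, rfl⟩
    · rintro j ⟨hx, hy⟩; exact (h j _ _ hx hy).2 ⟨rfl, rfl⟩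

lemma count_set : ∀ (es : List EdgeState) (j : ℕ) (d : Bool),
    es[j]? = some none → (es.set j (some d)).count none + 1 = es.count none
  | [], j, d, h => by simp at h
  | x :: t, 0, d, h => by
      simp only [List.getElem?_cons_zero, Option.some.injEq] at h
      subst h
      simp [List.count_cons]
  | x :: t, j+1, d, h => by
      rw [List.getElem?_cons_succ] at h
      have := count_set t j d h
      rw [List.set_cons_succ]
      simp only [List.count_cons]
      omega

lemma head_set (es : List EdgeState) (j : ℕ) (w : EdgeState) {v : Bool}
    (hj : es[j]? = some none) (hh : es.head? = some (some v)) :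
    (es.set j w).head? = some (some v) := by
  cases es with
  | nil => simp at hh
  | cons x t =>
    simp only [List.head?_cons, Option.some.injEq] at hh
    cases j with
    | zero => simp only [List.getElem?_cons_zero, Option.some.injEq] at hj; rw [hj] at hh; cases hh
    | succ j => rw [List.set_cons_succ]; simp [hh]

lemma getLast_set : ∀ (es : List EdgeState) (j : ℕ) (w : EdgeState) {v : Bool},
    es[j]? = some none → es.getLast? = some (some v) →
    (es.set j w).getLast? = some (some v)
  | [], j, w, v, hj, hv => by simp at hj
  | [x], j, w, v, hj, hv => by
      cases j with
      | zero =>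
          simp only [List.getElem?_cons_zero, Option.some.injEq] at hj
          simp only [List.getLast?_singleton, Option.some.injEq] at hv
          rw [hj] at hv; cases hv
      | succ j => simp at hj
  | x :: y :: t, j, w, v, hj, hv => by
      rw [List.getLast?_cons_cons] at hv
      cases j with
      | zero => rw [List.set_cons_zero, List.getLast?_cons_cons]; exact hv
      | succ j =>
          rw [List.getElem?_cons_succ] at hj
          have ih := getLast_set (y :: t) j w hj hv
          rw [List.set_cons_succ]
          cases j with
          | zero =>
              rw [List.set_cons_zero] at ih ⊢
              rw [List.getLast?_cons_cons]; exact ih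
          | succ j =>
              rw [List.set_cons_succ] at ih ⊢
              rw [List.getLast?_cons_cons]; exact ih

lemma full_eq : ∀ (es : List EdgeState) (a b : Bool),
    es.Chain' Rel → es.count none = 0 → es.head? = some (some a) →
    es.getLast? = some (some b) → a = b
  | [], a, b, _, _, hh, _ => by simp at hh
  | [x], a, b, _, _, hh, hl => by
      simp only [List.head?_cons, Option.some.injEq] at hh
      simp only [List.getLast?_singleton, Option.some.injEq] at hl
      rw [hh] at hl; exact Option.some.inj hl
  | x :: y :: t, a, b, hc, hcnt, hh, hl => by
      simp only [List.head?_cons, Option.some.injEq] at hh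
      subst hh
      rw [List.getLast?_cons_cons] at hl
      simp only [List.count_cons] at hcnt
      have hy : y ≠ none := by
        intro h; subst h; simp at hcnt
      obtain ⟨c, rfl⟩ := Option.ne_none_iff_exists'.mp hy
      have hrel : Rel (some a) (some c) := (List.isChain_cons_cons.mp hc).1
      have hac := rel_some hrel
      have hcnt' : (some c :: t).count none = 0 := by
        simp only [List.count_cons] at hcnt ⊢; omega
      have := full_eq (some c :: t) c b (List.isChain_cons_cons.mp hc).2 hcnt' (by simp) hl
      exact hac.trans this

/-- If no legal marking exists, then the parity of the number of unmarked edges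
is determined by whether the two boundary directions agree. -/
lemma noMove_parity : ∀ (N : ℕ) (es : List EdgeState) (a b : Bool),
    es.length ≤ N → es.Chain' Rel →
    es.head? = some (some a) → es.getLast? = some (some b) →
    (∀ j d, es[j]? = some none → ¬ (es.set j (some d)).Chain' Rel) →
    (Even (es.count none) ↔ a = b) := by
  intro N
  induction N with
  | zero =>
      intro es a b hlen _ hh _ _
      rw [List.length_eq_zero_iff.mp (Nat.le_zero.mp hlen)] at hh
      simp at hh
  | succ N ih =>
      intro es a b hlen hc hh hl hnm
      cases es with
      | nil => simp at hh
      | cons x t =>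
        simp only [List.head?_cons, Option.some.injEq] at hh
        subst hh
        cases t with
        | nil =>
            simp only [List.getLast?_singleton, Option.some.injEq] at hl
            simp [List.count_cons, hl]
        | cons y t' =>
          rw [List.getLast?_cons_cons] at hl
          cases y with
          | some c =>
              have hrel : Rel (some a) (some c) := (List.isChain_cons_cons.mp hc).1
              obtain rfl := rel_some hrel
              have hnm' : ∀ j d, (some a :: t')[j]? = some none →
                  ¬ ((some a :: t').set j (some d)).Chain' Rel := by
                intro j d hj hch
                cases j with
                | zero => simp at hj
                | succ j =>
                    refine hnm (j+2) d ?_ ?_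
                    · rw [List.getElem?_cons_succ]; exact hj
                    · rw [List.set_cons_succ, List.set_cons_succ]
                      rw [List.getElem?_cons_succ] at hj
                      rw [List.set_cons_succ] at hch
                      exact List.isChain_cons_cons.mpr ⟨rel_refl a, hch⟩
              have := ih (some a :: t') a b (by simp at hlen ⊢; omega)
                (List.isChain_cons_cons.mp hc).2 (by simp) hl hnm'
              simpa [List.count_cons] using this
          | none =>
              -- the unmarked edge right after the head must be blocked on its right
              have hchtail : (none :: t').Chain' Rel := (List.isChain_cons_cons.mp hc).2
              have hcht' : t'.Chain' Rel := List.IsChain.tail hchtail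
              have hblock := hnm 1 a (by simp)
              rw [List.set_cons_succ, List.set_cons_zero] at hblock
              have hhead : ∃ z, t'.head? = some z ∧ ¬ Rel (some a) z := by
                by_contra hcon
                push_neg at hcon
                refine hblock (List.isChain_cons_cons.mpr ⟨rel_refl a, ?_⟩)
                refine List.isChain_cons.mpr ⟨?_, hcht'⟩
                intro z hz
                exact hcon z (Option.mem_def.mp hz)
              obtain ⟨z, hz, hnr⟩ := hhead
              obtain rfl := not_rel_some_right hnr
              obtain ⟨t'', rfl⟩ : ∃ t'', t' = some (!a) :: t'' := by
                cases t' with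
                | nil => simp at hz
                | cons w s =>
                    simp only [List.head?_cons, Option.some.injEq] at hz
                    exact ⟨s, by rw [hz]⟩
              rw [List.getLast?_cons_cons] at hl
              have hnm' : ∀ j d, (some (!a) :: t'')[j]? = some none →
                  ¬ ((some (!a) :: t'').set j (some d)).Chain' Rel := by
                intro j d hj hch
                refine hnm (j+2) d ?_ ?_
                · rw [List.getElem?_cons_succ, List.getElem?_cons_succ]; exact hj
                · rw [List.set_cons_succ, List.set_cons_succ]
                  refine List.isChain_cons_cons.mpr ⟨rel_none_right _, ?_⟩
                  refine List.isChain_cons.mpr ⟨fun z hz => rel_none_left z, hch⟩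
              have hiff := ih (some (!a) :: t'') (!a) b (by simp at hlen ⊢; omega)
                (List.IsChain.tail hchtail) (by simp) hl hnm'
              have hcount : (some a :: none :: some (!a) :: t'').count none
                  = (some (!a) :: t'').count none + 1 := by
                simp [List.count_cons]
              rw [hcount, Nat.even_add_one, hiff]
              cases a <;> cases b <;> simp

lemma exists_move (es : List EdgeState) (a b : Bool) (hc : es.Chain' Rel)
    (hh : es.head? = some (some a)) (hl : es.getLast? = some (some b))
    (hab : a ≠ b) (hev : Even (es.count none)) :
    ∃ j d, es[j]? = some none ∧ (es.set j (some d)).Chain' Rel := by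
  by_contra h
  push_neg at h
  have := noMove_parity es.length es a b le_rfl hc hh hl h
  exact hab (this.mp hev)

lemma mex_eq_zero {S : Set ℕ} (h : 0 ∉ S) : mex S = 0 :=
  Nat.sInf_eq_zero.mpr (Or.inl h)

lemma mex_singleton_zero : mex ({0} : Set ℕ) = 1 := by
  unfold mex
  apply le_antisymm
  · exact Nat.sInf_le (by simp)
  · rw [Nat.one_le_iff_ne_zero]
    intro h0
    rcases Nat.sInf_eq_zero.mp h0 with h | h
    · simp at h
    · have h1 : (1:ℕ) ∈ {n : ℕ | n ∉ ({0} : Set ℕ)} := by simp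
      rw [h] at h1; exact h1

/-- Main induction: Grundy value of an admissible line position whose two extreme
edges are marked in opposite directions. -/
lemma grundy_val : ∀ (k : ℕ) (es : List EdgeState) (a b : Bool), a ≠ b →
    es.Chain' Rel → es.head? = some (some a) → es.getLast? = some (some b) →
    es.count none ≤ k →
    grundyAux (lineMoves false true true) k es
      = if Even (es.count none) then 1 else 0 := by
  intro k
  induction k with
  | zero =>
      intro es a b hab hc hh hl hcnt
      exact absurd (full_eq es a b hc (Nat.le_zero.mp hcnt) hh hl) hab
  | succ k ih =>
      intro es a b hab hc hh hl hcnt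
      have hu : es.count none ≠ 0 := fun h0 => hab (full_eq es a b hc h0 hh hl)
      show mex (grundyAux (lineMoves false true true) k '' lineMoves false true true es) = _
      have key : ∀ v ∈ grundyAux (lineMoves false true true) k '' lineMoves false true true es,
          v = if Even (es.count none) then 0 else 1 := by
        rintro v ⟨es', ⟨j, d, hj, rfl, hok⟩, rfl⟩
        have hc' := (lineOK_iff _).mp hok
        have hcnt' := count_set es j d hj
        have hh' := head_set es j (some d) hj hh
        have hl' := getLast_set es j (some d) hj hl
        rw [ih _ a b hab hc' hh' hl' (by omega)]
        have heq : es.count none = (es.set j (some d)).count none + 1 := hcnt'.symm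
        rw [heq]
        by_cases hE : Even ((es.set j (some d)).count none) <;>
          simp [hE, Nat.even_add_one]
      by_cases hE : Even (es.count none)
      · obtain ⟨j, d, hj, hch⟩ := exists_move es a b hc hh hl hab hE
        have hmem : es.set j (some d) ∈ lineMoves false true true es :=
          ⟨j, d, hj, rfl, (lineOK_iff _).mpr hch⟩
        have h0 : (0:ℕ) ∈ grundyAux (lineMoves false true true) k ''
            lineMoves false true true es := by
          refine ⟨es.set j (some d), hmem, ?_⟩
          have := key _ ⟨es.set j (some d), hmem, rfl⟩
          simpa [hE] using this
        have hS : grundyAux (lineMoves false true true) k '' lineMoves false true true es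
            = {0} := by
          apply Set.eq_singleton_iff_unique_mem.mpr
          exact ⟨h0, fun v hv => by simpa [hE] using key v hv⟩
        rw [hS, mex_singleton_zero]; simp [hE]
      · have h0 : (0:ℕ) ∉ grundyAux (lineMoves false true true) k ''
            lineMoves false true true es := by
          intro h
          have := key 0 h
          simp [hE] at this
        rw [mex_eq_zero h0]; simp [hE]

lemma chain_repl : ∀ (m : ℕ) (z : EdgeState),
    (List.replicate m (none : EdgeState) ++ [z]).Chain' Rel
  | 0, z => by simp [List.Chain']
  | m+1, z => by
      rw [List.replicate_succ, List.cons_append]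
      exact List.isChain_cons.mpr ⟨fun y _ => rel_none_left y, chain_repl m z⟩

lemma lineNim_val (a b : Bool) (hab : a ≠ b) (m : ℕ) :
    lineNim false (some a) (some b) (m+1) = if Even (m+1) then 1 else 0 := by
  show grundyAux (lineMoves false true true) _ _ = _
  have hes : ((some a : Option Bool).map some).toList ++ List.replicate (m+1) none
      ++ ((some b : Option Bool).map some).toList
      = some a :: (List.replicate (m+1) (none : EdgeState) ++ [some b]) := by
    simp
  rw [hes]
  have hcnt : (some a :: (List.replicate (m+1) (none : EdgeState) ++ [some b])).count none
      = m + 1 := by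
    simp [List.count_cons, List.count_append, List.count_replicate]
  have hch : (some a :: (List.replicate (m+1) (none : EdgeState) ++ [some b])).Chain' Rel := by
    have h2 := chain_repl (m+1) (some b)
    rw [List.replicate_succ, List.cons_append] at h2
    rw [List.replicate_succ, List.cons_append]
    exact List.isChain_cons_cons.mpr ⟨rel_none_right _, h2⟩
  have hl : (some a :: (List.replicate (m+1) (none : EdgeState) ++ [some b])).getLast?
      = some (some b) := by
    rw [← List.cons_append, List.getLast?_concat]
  have hlen : (some a :: (List.replicate (m+1) (none : EdgeState) ++ [some b])).length
      = m + 3 := by simp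
  rw [hlen, grundy_val (m+3) _ a b hab hch (by simp) hl (by rw [hcnt]; omega), hcnt]

end LineProof

/-- For every `n ≥ 1`, the type-5 line sub-game (both pre-marked
edges pointing into the path, •→•—•⋯•—•←•) and the type-6 line sub-game (both
pre-marked edges pointing away from the path, •←•—•⋯•—•→•) of the standard Game of
Cycles each have Grundy value `1` if `n` is even and `0` if `n` is odd. -/
theorem line_type5_type6_nimber_standard (n : ℕ) (hn : 1 ≤ n) :
    lineNim false (some true) (some false) n = (if Even n then 1 else 0) ∧
    lineNim false (some false) (some true) n = (if Even n then 1 else 0) := by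
  obtain ⟨m, rfl⟩ : ∃ m, n = m + 1 := ⟨n - 1, by omega⟩
  exact ⟨LineProof.lineNim_val true false (by simp) m,
    LineProof.lineNim_val false true (by simp) m⟩
end

section
/- Consider the six line sub-game types of Cycles with Sources on a path of n unmarked edges: type 1 has no pre-marked edges; type 2 has one pre-marked directed edge attached at the left end directed toward the path; type 3 has one pre-marked directed edge attached at the left end directed away from the path; type 4 has pre-marked directed edges at both ends pointing in the same direction along the path; type 5 has pre-marked directed edges at both ends both pointing into the path; type 6 has pre-marked directed edges at both ends both pointing away from the path. For every i ∈ {1,…,6} and every n ≥ 27, the Grundy value of the type-i game with n + 17 unmarked edges equals the Grundy value of the type-i game with n unmarked edges. -/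
/-- The optional pre-marked directed edges at the two ends of the path for the six
line sub-game types of Cycles with Sources:
type 1 (index 0): no pre-marked edges (•—•⋯•—•);
type 2 (index 1): left pre-marked edge directed toward the path (•→•—•⋯•—•);
type 3 (index 2): left pre-marked edge directed away from the path (•←•—•⋯•—•);
type 4 (index 3): pre-marked edges at both ends pointing in the same direction
along the path (•→•—•⋯•—•→•);
type 5 (index 4): both pre-marked edges pointing into the path (•→•—•⋯•—•←•);
type 6 (index 5): both pre-marked edges pointing away from the path (•←•—•⋯•—•→•). -/
def typeEnds (i : Fin 6) : Option Bool × Option Bool :=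
  match i.val with
  | 0 => (none, none)
  | 1 => (some true, none)
  | 2 => (some false, none)
  | 3 => (some true, some true)
  | 4 => (some true, some false)
  | _ => (some false, some true)


/-! Computational core -/

def mexLF (l : List ℕ) : ℕ → ℕ → ℕ
  | 0, n => n
  | f+1, n => if n ∈ l then mexLF l f (n+1) else n

def maxL (l : List ℕ) : ℕ := l.foldr max 0

def mexL (l : List ℕ) : ℕ := mexLF l (maxL l + 2) 0

lemma le_maxL {l : List ℕ} {x : ℕ} (h : x ∈ l) : x ≤ maxL l := by
  induction l with
  | nil => cases h
  | cons a t ih =>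
    rcases List.mem_cons.1 h with rfl | h
    · exact le_max_left _ _
    · exact le_trans (ih h) (le_max_right _ _)

lemma mexLF_spec (l : List ℕ) : ∀ f n, (∃ m, n ≤ m ∧ m < n + f ∧ m ∉ l) →
    mexLF l f n ∉ l ∧ (∀ m, n ≤ m → m < mexLF l f n → m ∈ l) ∧ n ≤ mexLF l f n := by
  intro f
  induction f with
  | zero =>
    intro n ⟨m, h1, h2, _⟩; omega
  | succ f ih =>
    intro n ⟨m, h1, h2, h3⟩
    simp only [mexLF]
    by_cases hn : n ∈ l
    · rw [if_pos hn]
      have hmn : n ≠ m := fun h => h3 (h ▸ hn)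
      obtain ⟨h4, h5, h6⟩ := ih (n+1) ⟨m, by omega, by omega, h3⟩
      exact ⟨h4, fun m' hm1 hm2 => by
        rcases Nat.eq_or_lt_of_le hm1 with rfl | h; · exact hn
        · exact h5 m' h hm2, by omega⟩
    · rw [if_neg hn]
      exact ⟨hn, fun m' h1 h2 => by omega, le_refl _⟩

lemma mexL_spec (l : List ℕ) : mexL l ∉ l ∧ ∀ m < mexL l, m ∈ l := by
  have h : ∃ m, 0 ≤ m ∧ m < 0 + (maxL l + 2) ∧ m ∉ l :=
    ⟨maxL l + 1, Nat.zero_le _, by omega, fun h => by have := le_maxL h; omega⟩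
  obtain ⟨h1, h2, _⟩ := mexLF_spec l (maxL l + 2) 0 h
  exact ⟨h1, fun m hm => h2 m (Nat.zero_le _) hm⟩

lemma mexL_not_mem (l : List ℕ) : mexL l ∉ l := (mexL_spec l).1
lemma mexL_min {l : List ℕ} {m : ℕ} (h : m < mexL l) : m ∈ l := (mexL_spec l).2 m h

lemma mexL_congr {l₁ l₂ : List ℕ} (h : ∀ x, x ∈ l₁ ↔ x ∈ l₂) : mexL l₁ = mexL l₂ := by
  by_contra hne
  rcases Nat.lt_or_ge (mexL l₁) (mexL l₂) with hlt | hge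
  · exact mexL_not_mem l₁ ((h _).2 (mexL_min hlt))
  · have hlt : mexL l₂ < mexL l₁ := by omega
    exact mexL_not_mem l₂ ((h _).1 (mexL_min hlt))

/-- legality of marking edge `j` (0-indexed) with direction `d` in a segment of `m`
unmarked edges with boundary arrows `a` (left) and `b` (right);
`a = true` means the left boundary edge points rightwards (into the segment),
`b = true` means the right boundary edge points rightwards (out of the segment). -/
def leg (a b : Bool) (m j : ℕ) (d : Bool) : Bool :=
  (decide (j ≠ 0) || d || !a) && (decide (j ≠ m - 1) || !d || b)

lemma leg_iff {a b : Bool} {m j : ℕ} {d : Bool} :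
    leg a b m j d = true ↔
      ((j = 0 → (d = true ∨ a = false)) ∧ (j = m - 1 → (d = false ∨ b = true))) := by
  simp only [leg, Bool.and_eq_true, Bool.or_eq_true, decide_eq_true_iff,
    Bool.not_eq_true']
  tauto

def movesList (g : Bool → Bool → ℕ → ℕ) (a b : Bool) (m : ℕ) : List ℕ :=
  (List.range m).flatMap fun j =>
    (([true, false].filter (leg a b m j)).map fun d => g a d j ^^^ g d b (m - 1 - j))

def idx (a b : Bool) : ℕ := cond a (cond b 0 1) (cond b 2 3)

def mkRow (g : Bool → Bool → ℕ → ℕ) (m : ℕ) : List ℕ :=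
  [mexL (movesList g true true m), mexL (movesList g true false m),
   mexL (movesList g false true m), mexL (movesList g false false m)]

def getv (T : List (List ℕ)) (a b : Bool) (k : ℕ) : ℕ := (T.getD k []).getD (idx a b) 0

def tab : ℕ → List (List ℕ)
  | 0 => []
  | n+1 => let T := tab n; T ++ [mkRow (getv T) n]

def val (a b : Bool) (m : ℕ) : ℕ := getv (tab (m+1)) a b m

lemma tab_length (n : ℕ) : (tab n).length = n := by
  induction n with
  | zero => rfl
  | succ n ih => simp [tab, ih]

lemma tab_getD_prefix {k n₁ n₂ : ℕ} (h1 : k < n₁) (h2 : n₁ ≤ n₂) :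
    (tab n₂).getD k [] = (tab n₁).getD k [] := by
  induction n₂ with
  | zero => omega
  | succ n ih =>
    rcases Nat.eq_or_lt_of_le h2 with rfl | h
    · rfl
    · have h' : n₁ ≤ n := by omega
      rw [← ih h']
      show ((tab n) ++ [_]).getD k [] = _
      rw [List.getD_eq_getElem?_getD, List.getD_eq_getElem?_getD,
        List.getElem?_append, if_pos (by rw [tab_length]; omega)]

lemma getv_tab {k n : ℕ} (h : k < n) (a b : Bool) : getv (tab n) a b k = val a b k := by
  unfold getv val
  rw [tab_getD_prefix (Nat.lt_succ_self k) h]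
  rfl

lemma flatMap_congr' {α β : Type*} {l : List α} {f g : α → List β}
    (h : ∀ x ∈ l, f x = g x) : l.flatMap f = l.flatMap g := by
  induction l with
  | nil => rfl
  | cons a t ih =>
    simp only [List.flatMap_cons, h a List.mem_cons_self,
      ih fun x hx => h x (List.mem_cons_of_mem _ hx)]

lemma movesList_congr {g₁ g₂ : Bool → Bool → ℕ → ℕ} {m : ℕ}
    (h : ∀ a b k, k < m → g₁ a b k = g₂ a b k) (a b : Bool) :
    movesList g₁ a b m = movesList g₂ a b m := by
  unfold movesList
  apply flatMap_congr'
  intro j hj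
  have hjm : j < m := List.mem_range.1 hj
  apply List.map_congr_left
  intro d _
  rw [h a d j hjm, h d b (m - 1 - j) (by omega)]

lemma val_eq (a b : Bool) (m : ℕ) : val a b m = mexL (movesList val a b m) := by
  have h1 : val a b m = mexL (movesList (getv (tab m)) a b m) := by
    show getv (tab (m+1)) a b m = _
    unfold getv
    have : (tab (m+1)).getD m [] = mkRow (getv (tab m)) m := by
      show ((tab m) ++ [mkRow (getv (tab m)) m]).getD m [] = _
      rw [List.getD_eq_getElem?_getD, List.getElem?_append_right (by rw [tab_length]),
        tab_length, Nat.sub_self]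
      rfl
    rw [this]
    cases a <;> cases b <;> rfl
  rw [h1, movesList_congr (fun a b k hk => getv_tab hk a b)]

def LIT : List (List ℕ) := [[0, 0, 0, 0], [1, 0, 1, 1], [2, 1, 0, 2], [3, 0, 1, 3], [1, 1, 0, 1], [3, 0, 3, 3], [2, 3, 2, 2], [4, 2, 0, 4], [5, 0, 2, 5], [2, 2, 3, 2], [3, 3, 0, 3], [1, 0, 1, 1], [3, 1, 0, 3], [2, 0, 1, 2], [1, 1, 0, 1], [4, 0, 5, 4], [2, 5, 7, 2], [4, 7, 0, 4], [1, 0, 1, 1], [2, 1, 0, 2], [3, 0, 1, 3], [1, 1, 0, 1], [3, 0, 3, 3], [2, 3, 2, 2], [4, 2, 4, 4], [5, 4, 5, 5], [2, 5, 3, 2], [3, 3, 0, 3], [1, 0, 1, 1], [3, 1, 0, 3], [2, 0, 1, 2], [1, 1, 0, 1], [4, 0, 5, 4], [3, 5, 7, 3], [4, 7, 8, 4], [1, 8, 1, 1], [2, 1, 0, 2], [3, 0, 1, 3], [1, 1, 0, 1], [3, 0, 3, 3], [2, 3, 2, 2], [4, 2, 4, 4], [5, 4, 5, 5], [9, 5,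 3, 9], [3, 3, 0, 3], [1, 0, 1, 1], [3, 1, 0, 3], [2, 0, 1, 2], [1, 1, 0, 1], [4, 0, 5, 4], [3, 5, 7, 3], [4, 7, 8, 4], [1, 8, 1, 1], [2, 1, 0, 2], [3, 0, 1, 3], [1, 1, 0, 1], [3, 0, 3, 3], [2, 3, 2, 2], [4, 2, 4, 4], [5, 4, 5, 5], [9, 5, 3, 9], [3, 3, 0, 3], [1, 0, 1, 1], [3, 1, 0, 3], [2, 0, 1, 2], [1, 1, 0, 1], [4, 0, 5, 4], [3, 5, 7, 3], [4, 7, 8, 4], [1, 8, 1, 1], [2, 1, 0, 2], [3, 0, 1, 3], [1, 1, 0, 1], [3, 0, 3, 3], [2, 3, 2, 2], [4, 2, 4, 4], [5, 4, 5, 5], [9, 5, 3, 9], [3, 3, 0, 3], [1, 0, 1, 1], [3, 1, 0, 3], [2, 0, 1, 2], [1, 1, 0, 1], [4, 0, 5, 4], [3, 5, 7, 3], [4, 7, 8, 4], [1, 8, 1, 1], [2, 1, 0, 2], [3, 0, 1, 3]]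

set_option maxRecDepth 100000 in
set_option maxHeartbeats 4000000 in
lemma tab89 : tab 89 = LIT := by decide
-- appended after core
lemma mem_movesList {x : ℕ} {a b : Bool} {m : ℕ} :
    x ∈ movesList val a b m ↔
      ∃ j, j < m ∧ ∃ d, leg a b m j d = true ∧ x = val a d j ^^^ val d b (m - 1 - j) := by
  unfold movesList
  simp only [List.mem_flatMap, List.mem_map, List.mem_filter, List.mem_range]
  constructor
  · rintro ⟨j, hj, d, ⟨_, hleg⟩, rfl⟩
    exact ⟨j, hj, d, hleg, rfl⟩
  · rintro ⟨j, hj, d, hleg, rfl⟩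
    exact ⟨j, hj, d, ⟨by cases d <;> simp, hleg⟩, rfl⟩

lemma val_move_ne {a b : Bool} {m j : ℕ} {d : Bool} (hj : j < m)
    (hleg : leg a b m j d = true) :
    val a d j ^^^ val d b (m - 1 - j) ≠ val a b m := by
  intro h
  have hmem : val a b m ∈ movesList val a b m := h ▸ mem_movesList.2 ⟨j, hj, d, hleg, rfl⟩
  have h2 := mexL_not_mem (movesList val a b m)
  rw [← val_eq a b m] at h2
  exact h2 hmem

lemma val_move_ex {a b : Bool} {m u : ℕ} (hu : u < val a b m) :
    ∃ j, j < m ∧ ∃ d, leg a b m j d = true ∧ u = val a d j ^^^ val d b (m - 1 - j) := by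
  rw [val_eq] at hu
  exact mem_movesList.1 (mexL_min hu)

lemma val_zero (a b : Bool) : val a b 0 = 0 := by
  rw [val_eq]
  rfl

lemma val_base : ∀ m, 27 ≤ m → m ≤ 71 → ∀ a b, val a b (m + 17) = val a b m := by
  have key : ∀ k, k < 89 → ∀ a b, val a b k = getv LIT a b k := by
    intro k hk a b
    rw [← tab89, getv_tab hk]
  have hdec : ∀ m' : ℕ, m' < 45 → ∀ a b : Bool, getv LIT a b (m' + 44) = getv LIT a b (m' + 27) := by decide
  intro m h1 h2 a b
  rw [key (m + 17) (by omega) a b, key m (by omega) a b]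
  have := hdec (m - 27) (by omega) a b
  rwa [show m - 27 + 44 = m + 17 by omega, show m - 27 + 27 = m by omega] at this

lemma val_periodic : ∀ m, 27 ≤ m → ∀ a b, val a b (m + 17) = val a b m := by
  intro m
  induction m using Nat.strong_induction_on with
  | _ m ih =>
    intro hm a b
    by_cases hm71 : m ≤ 71
    · exact val_base m hm hm71 a b
    · have hm72 : 72 ≤ m := by omega
      rw [val_eq a b (m+17), val_eq a b m]
      apply mexL_congr
      intro x
      rw [mem_movesList, mem_movesList]
      constructor
      · rintro ⟨j, hj, d, hleg, rfl⟩
        rw [leg_iff] at hleg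
        by_cases hc : 44 ≤ j
        · refine ⟨j - 17, by omega, d, ?_, ?_⟩
          · rw [leg_iff]
            exact ⟨fun h => by omega, fun h => hleg.2 (by omega)⟩
          · have e1 : val a d (j - 17) = val a d j := by
              have := ih (j - 17) (by omega) (by omega) a d
              rw [show j - 17 + 17 = j by omega] at this
              exact this.symm
            rw [e1, show m - 1 - (j - 17) = m + 17 - 1 - j by omega]
        · refine ⟨j, by omega, d, ?_, ?_⟩
          · rw [leg_iff]
            exact ⟨hleg.1, fun h => by omega⟩
          · have e1 : val d b (m - 1 - j) = val d b (m + 17 - 1 - j) := by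
              have := ih (m - 1 - j) (by omega) (by omega) d b
              rw [show m - 1 - j + 17 = m + 17 - 1 - j by omega] at this
              exact this.symm
            rw [e1]
      · rintro ⟨j, hj, d, hleg, rfl⟩
        rw [leg_iff] at hleg
        by_cases hc : 36 ≤ j
        · refine ⟨j + 17, by omega, d, ?_, ?_⟩
          · rw [leg_iff]
            exact ⟨fun h => by omega, fun h => hleg.2 (by omega)⟩
          · have e1 : val a d (j + 17) = val a d j := ih j (by omega) (by omega) a d
            rw [e1, show m + 17 - 1 - (j + 17) = m - 1 - j by omega]
        · refine ⟨j, by omega, d, ?_, ?_⟩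
          · rw [leg_iff]
            exact ⟨hleg.1, fun h => by omega⟩
          · have e1 : val d b (m + 17 - 1 - j) = val d b (m - 1 - j) := by
              have := ih (m - 1 - j) (by omega) (by omega) d b
              rwa [show m - 1 - j + 17 = m + 17 - 1 - j by omega] at this
            rw [e1]
-- game side ------------------------------------------------------------

lemma mex_eq {S : Set ℕ} {v : ℕ} (h1 : v ∉ S) (h2 : ∀ u < v, u ∈ S) : mex S = v := by
  unfold mex
  have hne : v ∈ {n | n ∉ S} := h1
  refine le_antisymm (Nat.sInf_le hne) ?_
  by_contra hlt
  push_neg at hlt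
  have hmem := Nat.sInf_mem (⟨v, hne⟩ : Set.Nonempty {n | n ∉ S})
  exact hmem (h2 _ hlt)

lemma grundyAux_succ {α : Type} (moves : α → Set α) (k : ℕ) (x : α) :
    grundyAux moves (k+1) x = mex ((grundyAux moves k) '' (moves x)) := rfl

/-- grundy values agree along a map commuting with moves, on an invariant `P`. -/
lemma grundy_map' {α β : Type} (mA : α → Set α) (mB : β → Set β) (φ : α → β)
    (P : α → Prop)
    (hmove : ∀ x, P x → mB (φ x) = φ '' mA x)
    (hpres : ∀ x y, P x → y ∈ mA x → P y) :
    ∀ k x, P x → grundyAux mB k (φ x) = grundyAux mA k x := by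
  intro k
  induction k with
  | zero => intro x _; rfl
  | succ k ih =>
    intro x hx
    rw [grundyAux_succ, grundyAux_succ, hmove x hx, ← Set.image_comp]
    congr 1
    apply Set.image_congr
    intro y hy
    exact ih y (hpres x y hx hy)

def NS (x y : EdgeState) : Prop := ¬(x = some true ∧ y = some false)

lemma NS_left_none {y : EdgeState} : NS none y := by simp [NS]
lemma NS_right_none {x : EdgeState} : NS x none := by simp [NS]
lemma NS_left_false {y : EdgeState} : NS (some false) y := by simp [NS]
lemma NS_right_true {x : EdgeState} : NS x (some true) := by simp [NS]
lemma NS_some_iff {a b : Bool} : NS (some a) (some b) ↔ (b = true ∨ a = false) := by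
  cases a <;> cases b <;> simp [NS]

def chainMoves (c : List EdgeState) : Set (List EdgeState) :=
  { c' | ∃ (j : ℕ) (d : Bool), getElem? c j = some none ∧ c' = c.set j (some d) ∧ List.Chain' NS c' }

def cvAux : Bool → ℕ → List EdgeState → ℕ
  | _, _, [] => 0
  | a, cur, none :: t => cvAux a (cur+1) t
  | a, cur, some d :: t => val a d cur ^^^ cvAux d 0 t

def cv' (a : Bool) (t : List EdgeState) : ℕ := cvAux a 0 t

def LM (t : List EdgeState) : Prop := t = [] ∨ ∃ l' b, t = l' ++ [some b]

-- elementary list lemmas ------------------------------------------------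

lemma getq_append_lt {l₁ l₂ : List EdgeState} {n : ℕ} (h : n < l₁.length) :
    (l₁ ++ l₂)[n]? = l₁[n]? := by
  induction l₁ generalizing n with
  | nil => simp at h
  | cons a t ih =>
    cases n with
    | zero => rfl
    | succ n => exact ih (by simpa using h)

lemma getq_append_ge {l₁ l₂ : List EdgeState} {n : ℕ} (h : l₁.length ≤ n) :
    (l₁ ++ l₂)[n]? = l₂[(n - l₁.length)]? := by
  induction l₁ generalizing n with
  | nil => simp
  | cons a t ih =>
    cases n with
    | zero => simp at h
    | succ n =>
      have := ih (n := n) (by simpa using h)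
      simpa using this

lemma set_append_lt {l₁ l₂ : List EdgeState} {n : ℕ} (v : EdgeState) (h : n < l₁.length) :
    (l₁ ++ l₂).set n v = l₁.set n v ++ l₂ := by
  induction l₁ generalizing n with
  | nil => simp at h
  | cons a t ih =>
    cases n with
    | zero => rfl
    | succ n =>
      show a :: (t ++ l₂).set n v = _
      rw [ih (by simpa using h)]
      rfl

lemma set_append_ge {l₁ l₂ : List EdgeState} {n : ℕ} (v : EdgeState) (h : l₁.length ≤ n) :
    (l₁ ++ l₂).set n v = l₁ ++ l₂.set (n - l₁.length) v := by
  induction l₁ generalizing n with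
  | nil => simp
  | cons a t ih =>
    cases n with
    | zero => simp at h
    | succ n =>
      show a :: (t ++ l₂).set n v = _
      rw [ih (by simpa using h)]
      simp [Nat.succ_sub_one]

lemma getq_replicate_append {l : List EdgeState} {m j : ℕ} (h : j < m) (x : EdgeState) :
    (List.replicate m x ++ l)[j]? = some x := by
  rw [getq_append_lt (by simpa using h)]
  induction m generalizing j with
  | zero => omega
  | succ m ih =>
    cases j with
    | zero => rfl
    | succ j => exact ih (by omega)

lemma set_replicate_append {l : List EdgeState} {m j : ℕ} (h : j < m) (x v : EdgeState) :
    (List.replicate m x ++ l).set j v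
      = List.replicate j x ++ v :: (List.replicate (m - 1 - j) x ++ l) := by
  induction j generalizing m with
  | zero =>
    cases m with
    | zero => omega
    | succ m => simp [List.replicate_succ]
  | succ j ih =>
    cases m with
    | zero => omega
    | succ m =>
      show (x :: (List.replicate m x ++ l)).set (j+1) v = _
      rw [List.set_cons_succ, ih (by omega)]
      rw [show m + 1 - 1 - (j+1) = m - 1 - j from by omega]
      rfl

-- LM lemmas --------------------------------------------------------------

lemma LM_set {t : List EdgeState} {j : ℕ} {d : Bool} (h : LM t) :
    LM (t.set j (some d)) := by
  rcases h with rfl | ⟨l', b, rfl⟩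
  · exact Or.inl rfl
  · rcases Nat.lt_or_ge j l'.length with hj | hj
    · exact Or.inr ⟨l'.set j (some d), b, by rw [set_append_lt _ hj]⟩
    · rw [set_append_ge _ hj]
      rcases Nat.eq_or_lt_of_le hj with rfl | hj2
    -- j = l'.length : set index 0 of [some b]
      · simp only [Nat.sub_self]
        exact Or.inr ⟨l', d, rfl⟩
      · have : j - l'.length ≥ 1 := by omega
        rw [show [some b].set (j - l'.length) (some d) = [some b] from by
          rcases Nat.exists_eq_add_of_le this with ⟨c, hc⟩
          rw [hc, Nat.add_comm]
          rfl]
        exact Or.inr ⟨l', b, rfl⟩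

lemma LM_decomp {t : List EdgeState} (h : LM t) (hne : t ≠ []) :
    ∃ m b rest, t = List.replicate m none ++ some b :: rest ∧ LM rest := by
  induction t with
  | nil => exact absurd rfl hne
  | cons x t ih =>
    have hLMt : t ≠ [] → LM t := by
      intro htne
      rcases h with h | ⟨l', b, hl⟩
      · simp at h
      · cases l' with
        | nil => simp at hl; exact absurd hl.2 htne
        | cons y l'' =>
          rw [List.cons_append] at hl
          rw [List.cons.injEq] at hl
          exact Or.inr ⟨l'', b, hl.2⟩
    cases x with
    | some b =>
      refine ⟨0, b, t, rfl, ?_⟩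
      by_cases htne : t = []
      · exact Or.inl htne
      · exact hLMt htne
    | none =>
      have htne : t ≠ [] := by
        rintro rfl
        rcases h with h | ⟨l', b, hl⟩
        · simp at h
        · cases l' with
          | nil => simp at hl
          | cons y l'' => simp at hl
      obtain ⟨m, b, rest, h1, h2⟩ := ih (hLMt htne) htne
      exact ⟨m + 1, b, rest, by rw [List.replicate_succ, List.cons_append, h1], h2⟩

-- cvAux lemmas ------------------------------------------------------------

lemma cvAux_replicate (m : ℕ) (a : Bool) (cur : ℕ) (l : List EdgeState) :
    cvAux a cur (List.replicate m none ++ l) = cvAux a (cur + m) l := by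
  induction m generalizing cur with
  | zero => rfl
  | succ m ih =>
    rw [List.replicate_succ, List.cons_append]
    show cvAux a (cur + 1) _ = _
    rw [ih (cur + 1), show cur + 1 + m = cur + (m + 1) from by omega]

lemma cv'_seg (a b : Bool) (m : ℕ) (rest : List EdgeState) :
    cv' a (List.replicate m none ++ some b :: rest) = val a b m ^^^ cv' b rest := by
  unfold cv'
  rw [cvAux_replicate, Nat.zero_add]
  rfl

lemma cv'_no_none : ∀ (t : List EdgeState) (a : Bool), t.count none = 0 → cv' a t = 0 := by
  intro t
  induction t with
  | nil => intro a _; rfl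
  | cons x t ih =>
    intro a h
    cases x with
    | none => simp [List.count_cons] at h
    | some b =>
      have ht : t.count none = 0 := by
        rw [List.count_cons] at h
        omega
      show val a b 0 ^^^ cv' b t = 0
      rw [val_zero, ih b ht]
      rfl

lemma count_set_none : ∀ (t : List EdgeState) (j : ℕ) (d : Bool),
    t[j]? = some none → (t.set j (some d)).count none + 1 = t.count none := by
  intro t
  induction t with
  | nil => intro j d h; simp at h
  | cons x t ih =>
    intro j d h
    cases j with
    | zero =>
      cases x with
      | none => simp [List.count_cons]
      | some b => simp at h
    | succ j =>
      have := ih j d h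
      show ((x :: t.set j (some d)).count none) + 1 = _
      rw [List.count_cons, List.count_cons]
      omega

lemma count_pos_of_get {t : List EdgeState} {j : ℕ} (h : t[j]? = some none) :
    1 ≤ t.count none := by
  have hm : (none : EdgeState) ∈ t := List.mem_of_getElem? h
  exact List.count_pos_iff.2 hm

-- chain helpers -----------------------------------------------------------

lemma chain_repl_append {l : List EdgeState} (m : ℕ) (h : List.Chain' NS l) :
    List.Chain' NS (List.replicate m none ++ l) := by
  induction m with
  | zero => exact h
  | succ m ih =>
    rw [List.replicate_succ, List.cons_append]
    exact List.isChain_cons.2 ⟨fun y _ => NS_left_none, ih⟩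

lemma chain_cons_of {x : EdgeState} {l : List EdgeState} (h : List.Chain' NS l)
    (h2 : ∀ y ∈ l.head?, NS x y) : List.Chain' NS (x :: l) :=
  List.isChain_cons.2 ⟨h2, h⟩

lemma head_repl_append {l : List EdgeState} {m : ℕ} :
    (List.replicate m none ++ l).head? = if m = 0 then l.head? else some none := by
  cases m with
  | zero => rfl
  | succ m => rw [List.replicate_succ, List.cons_append]; simp

lemma chain_build_pre {a b : Bool} {l : List EdgeState} {m : ℕ}
    (hab : m = 0 → NS (some a) (some b)) (h : List.Chain' NS (some b :: l)) :
    List.Chain' NS (some a :: (List.replicate m none ++ some b :: l)) := by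
  apply chain_cons_of (chain_repl_append m h)
  intro y hy
  rw [head_repl_append] at hy
  by_cases hm : m = 0
  · rw [if_pos hm] at hy
    simp at hy
    rw [← hy]
    exact hab hm
  · rw [if_neg hm] at hy
    simp at hy
    rw [← hy]
    exact NS_right_none

lemma chain_build_seg {a b d : Bool} {rest : List EdgeState} {j j' : ℕ}
    (h1 : j = 0 → NS (some a) (some d)) (h2 : j' = 0 → NS (some d) (some b))
    (h3 : List.Chain' NS (some b :: rest)) :
    List.Chain' NS (some a :: (List.replicate j none ++
      some d :: (List.replicate j' none ++ some b :: rest))) :=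
  chain_build_pre h1 (chain_build_pre h2 h3)

lemma chain_suffix_seg {a : Bool} {x : EdgeState} {pre l : List EdgeState}
    (h : List.Chain' NS (some a :: (pre ++ x :: l))) : List.Chain' NS (x :: l) :=
  h.suffix (by
    refine ⟨some a :: pre, ?_⟩
    simp)

lemma chain_pair_of_cons {x y : EdgeState} {l : List EdgeState}
    (h : List.Chain' NS (x :: y :: l)) : NS x y :=
  (List.isChain_cons_cons.1 h).1

-- more helpers ------------------------------------------------------------

lemma getq_mid {m : ℕ} {b : Bool} {rest : List EdgeState} :
    (List.replicate m none ++ some b :: rest)[m]? = some (some b) := by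
  rw [getq_append_ge (by simp)]
  simp

lemma getq_after {m j : ℕ} {b : Bool} {rest : List EdgeState} (h : m < j) :
    (List.replicate m none ++ some b :: rest)[j]? = rest[(j - m - 1)]? := by
  rw [getq_append_ge (by simp; omega)]
  rw [List.length_replicate, show j - m = (j - m - 1) + 1 from by omega]
  rfl

lemma set_after {m j : ℕ} {b : Bool} {rest : List EdgeState} (h : m < j) (v : EdgeState) :
    (List.replicate m none ++ some b :: rest).set j v
      = List.replicate m none ++ some b :: rest.set (j - m - 1) v := by
  rw [set_append_ge _ (by simp; omega)]
  rw [List.length_replicate, show j - m = (j - m - 1) + 1 from by omega]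
  rfl

lemma xor_right_cancel {x y r : ℕ} (h : x ^^^ r = y ^^^ r) : x = y := by
  have := congrArg (fun z => z ^^^ r) h
  simpa [Nat.xor_xor_cancel_right] using this

lemma seg_len {m : ℕ} {b : Bool} {rest : List EdgeState} :
    (List.replicate m none ++ some b :: rest).length = m + 1 + rest.length := by
  simp
  omega

-- NE ----------------------------------------------------------------------

lemma cv_move_ne : ∀ (N : ℕ) (t : List EdgeState) (a : Bool), t.length ≤ N → LM t →
    ∀ j d, t[j]? = some none → List.Chain' NS (some a :: t.set j (some d)) →
    cv' a (t.set j (some d)) ≠ cv' a t := by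
  intro N
  induction N with
  | zero =>
    intro t a hlen _ j d hget _
    rw [List.length_eq_zero_iff.1 (Nat.le_zero.1 hlen)] at hget
    simp at hget
  | succ N ih =>
    intro t a hlen hLM j d hget hchain
    have hne : t ≠ [] := by rintro rfl; simp at hget
    obtain ⟨m, b, rest, rfl, hLMrest⟩ := LM_decomp hLM hne
    rcases Nat.lt_trichotomy j m with hjm | hjm | hjm
    · -- move inside the first segment
      rw [set_replicate_append hjm] at hchain ⊢
      rw [cv'_seg, cv'_seg, cv'_seg, ← Nat.xor_assoc]
      intro h
      have heq : val a d j ^^^ val d b (m - 1 - j) = val a b m := xor_right_cancel h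
      have hleg : leg a b m j d = true := by
        rw [leg_iff]
        constructor
        · intro hj0
          subst hj0
          have hpair : NS (some a) (some d) := by
            have := hchain
            rw [List.replicate] at this
            rw [List.nil_append] at this
            exact chain_pair_of_cons this
          exact NS_some_iff.1 hpair
        · intro hjm1
          have hz : m - 1 - j = 0 := by omega
          rw [hz] at hchain
          have hsuf : List.Chain' NS (some d :: (List.replicate 0 none ++ some b :: rest)) :=
            chain_suffix_seg hchain
          rw [List.replicate] at hsuf
          rw [List.nil_append] at hsuf
          have hpair := chain_pair_of_cons hsuf
          rcases NS_some_iff.1 hpair with h | h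
          · exact Or.inr h
          · exact Or.inl h
      exact val_move_ne hjm hleg heq
    · subst hjm
      rw [getq_mid] at hget
      simp at hget
    · -- move in the rest
      rw [set_after hjm] at hchain ⊢
      rw [cv'_seg, cv'_seg]
      intro h
      have heq : cv' b (rest.set (j - m - 1) (some d)) = cv' b rest :=
        Nat.xor_right_injective h
      have hget' : rest[(j - m - 1)]? = some none := by
        rw [getq_after hjm] at hget
        exact hget
      have hchain' : List.Chain' NS (some b :: rest.set (j - m - 1) (some d)) :=
        chain_suffix_seg hchain
      have hlen' : rest.length ≤ N := by
        rw [seg_len] at hlen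
        omega
      exact ih rest b hlen' hLMrest (j - m - 1) d hget' hchain' heq

-- EX ----------------------------------------------------------------------

lemma cv_move_ex : ∀ (N : ℕ) (t : List EdgeState) (a : Bool), t.length ≤ N → LM t →
    List.Chain' NS (some a :: t) → ∀ u, u < cv' a t →
    ∃ j d, t[j]? = some none ∧ List.Chain' NS (some a :: t.set j (some d)) ∧
      cv' a (t.set j (some d)) = u := by
  intro N
  induction N with
  | zero =>
    intro t a hlen _ _ u hu
    rw [List.length_eq_zero_iff.1 (Nat.le_zero.1 hlen)] at hu
    simp [cv', cvAux] at hu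
  | succ N ih =>
    intro t a hlen hLM hch u hu
    by_cases hne : t = []
    · subst hne; simp [cv', cvAux] at hu
    obtain ⟨m, b, rest, rfl, hLMrest⟩ := LM_decomp hLM hne
    rw [cv'_seg] at hu
    rcases Nat.lt_xor_cases hu with h1 | h2
    · -- move in the first segment
      obtain ⟨j, hj, d, hleg, he⟩ := val_move_ex h1
      refine ⟨j, d, getq_replicate_append hj none, ?_, ?_⟩
      · rw [set_replicate_append hj]
        apply chain_build_seg
        · intro hj0
          rw [NS_some_iff]
          exact (leg_iff.1 hleg).1 hj0
        · intro hj'0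
          rw [NS_some_iff]
          have := (leg_iff.1 hleg).2 (by omega)
          tauto
        · exact chain_suffix_seg hch
      · rw [set_replicate_append hj, cv'_seg, cv'_seg, ← Nat.xor_assoc, ← he]
        exact Nat.xor_xor_cancel_right _ _
    · -- move in the rest
      have hlen' : rest.length ≤ N := by rw [seg_len] at hlen; omega
      obtain ⟨j', d, hget', hch', hval'⟩ :=
        ih rest b hlen' hLMrest (chain_suffix_seg hch) _ h2
      refine ⟨m + 1 + j', d, ?_, ?_, ?_⟩
      · rw [getq_after (by omega), show m + 1 + j' - m - 1 = j' from by omega]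
        exact hget'
      · rw [set_after (by omega), show m + 1 + j' - m - 1 = j' from by omega]
        apply chain_build_pre
        · intro hm0
          subst hm0
          rw [List.replicate] at hch
          rw [List.nil_append] at hch
          exact chain_pair_of_cons hch
        · exact hch'
      · rw [set_after (by omega), show m + 1 + j' - m - 1 = j' from by omega,
          cv'_seg, hval', Nat.xor_comm u (val a b m), ← Nat.xor_assoc, Nat.xor_self,
          Nat.zero_xor]

-- MAIN ----------------------------------------------------------------------

lemma chain_grundy : ∀ (k : ℕ) (t : List EdgeState) (a : Bool), t.count none ≤ k →
    LM t → List.Chain' NS (some a :: t) →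
    grundyAux chainMoves k (some a :: t) = cv' a t := by
  intro k
  induction k with
  | zero =>
    intro t a hc _ _
    exact (cv'_no_none t a (Nat.le_zero.1 hc)).symm
  | succ k ih =>
    intro t a hc hLM hch
    rw [grundyAux_succ]
    have himg : (grundyAux chainMoves k) '' (chainMoves (some a :: t)) =
        {x | ∃ j d, t[j]? = some none ∧
          List.Chain' NS (some a :: t.set j (some d)) ∧
          x = cv' a (t.set j (some d))} := by
      ext x
      simp only [Set.mem_image, Set.mem_setOf_eq]
      constructor
      · rintro ⟨c', ⟨j, d, hget, rfl, hOK⟩, rfl⟩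
        cases j with
        | zero => simp at hget
        | succ j =>
          have hget' : t[j]? = some none := hget
          have hset : (some a :: t).set (j+1) (some d) = some a :: t.set j (some d) := rfl
          rw [hset] at hOK ⊢
          have hcount : (t.set j (some d)).count none ≤ k := by
            have := count_set_none t j d hget'
            omega
          exact ⟨j, d, hget', hOK, ih (t.set j (some d)) a hcount (LM_set hLM) hOK⟩
      · rintro ⟨j, d, hget, hOK, rfl⟩
        refine ⟨some a :: t.set j (some d), ⟨j+1, d, hget, rfl, hOK⟩, ?_⟩
        have hcount : (t.set j (some d)).count none ≤ k := by
          have := count_set_none t j d hget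
          omega
        exact ih (t.set j (some d)) a hcount (LM_set hLM) hOK
    rw [himg]
    apply mex_eq
    · rintro ⟨j, d, hget, hOK, heq⟩
      exact cv_move_ne t.length t a le_rfl hLM j d hget hOK heq.symm
    · intro u hu
      obtain ⟨j, d, hget, hOK, hval⟩ :=
        cv_move_ex t.length t a le_rfl hLM hch u hu
      exact ⟨j, d, hget, hOK, hval.symm⟩

-- bridge ------------------------------------------------------------------

lemma getq_zero (l : List EdgeState) : l[0]? = l.head? := by cases l <;> rfl

lemma getq_some_lt : ∀ (l : List EdgeState) (j : ℕ) (x : EdgeState),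
    l[j]? = some x → j < l.length := by
  intro l
  induction l with
  | nil => intro j x h; simp at h
  | cons a t ih =>
    intro j x h
    cases j with
    | zero => simp
    | succ j => have := ih j x h; simpa using Nat.succ_lt_succ this

lemma pairs_iff : ∀ l : List EdgeState, List.Chain' NS l ↔
    ∀ j, ¬(l[j]? = some (some true) ∧ l[(j+1)]? = some (some false)) := by
  intro l
  induction l with
  | nil =>
    constructor
    · intro _ j ⟨h, _⟩; simp at h
    · intro _; exact List.isChain_nil
  | cons x l ih =>
    unfold List.Chain'
    rw [List.isChain_cons]
    constructor
    · rintro ⟨hhead, hchain⟩ j ⟨h1, h2⟩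
      cases j with
      | zero =>
        simp only [List.getElem?_cons_zero] at h1
        cases l with
        | nil => simp at h2
        | cons y l' =>
          have hy : y = some false := by simpa using h2
          have := hhead y (by rfl)
          rw [hy] at this
          exact this ⟨by simpa using h1, rfl⟩
      | succ j => exact (ih.1 hchain) j ⟨h1, h2⟩
    · intro h
      refine ⟨?_, ih.2 fun j => h (j+1)⟩
      intro y hy
      rintro ⟨hx, hyL⟩
      apply h 0
      constructor
      · simpa using hx
      · show l[0]? = some (some false)
        rw [Option.mem_def] at hy
        rw [getq_zero, hy, hyL]

lemma NS_right_false_iff {x : EdgeState} : NS x (some false) ↔ x ≠ some true := by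
  simp [NS]

lemma LK {exL exR : Bool} {es : List EdgeState} (hne : es ≠ []) :
    LineOK true exL exR es ↔
      List.Chain' NS (some (!exL) :: (es ++ [some exR])) := by
  have happend : List.Chain' NS (es ++ [some exR]) ↔
      (List.Chain' NS es ∧ ∀ x ∈ es.getLast?, NS x (some exR)) := by
    unfold List.Chain'
    rw [List.isChain_append]
    constructor
    · rintro ⟨a, _, c⟩
      exact ⟨a, fun x hx => c x hx _ rfl⟩
    · rintro ⟨a, c⟩
      refine ⟨a, List.isChain_singleton _, fun x hx y hy => ?_⟩
      rw [Option.mem_def] at hy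
      have hy' : y = some exR := by simpa using hy.symm
      rw [hy']
      exact c x hx
  constructor
  · intro hL
    obtain ⟨h1, _, h3, h4⟩ := hL
    apply List.isChain_cons.2
    refine ⟨?_, happend.2 ⟨(pairs_iff es).2 h1, ?_⟩⟩
    · intro y hy
      rw [List.head?_append_of_ne_nil _ hne, Option.mem_def] at hy
      cases exL with
      | true => exact NS_left_false
      | false =>
        rcases h3 with h3 | h3
        · exact absurd h3 (by simp)
        · show NS (some true) y
          rintro ⟨-, hyL⟩
          exact h3.1 (by rw [hy, hyL])
    · intro x hx
      cases exR with
      | true => exact NS_right_true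
      | false =>
        rcases h4 with h4 | h4
        · exact absurd h4 (by simp)
        · rw [NS_right_false_iff]
          intro hxR
          rw [Option.mem_def] at hx
          exact h4.1 (by rw [hx, hxR])
  · intro hC
    obtain ⟨hh, hrest⟩ := List.isChain_cons.1 hC
    obtain ⟨hes, hlast⟩ := happend.1 hrest
    refine ⟨(pairs_iff es).1 hes, Or.inl rfl, ?_, ?_⟩
    · cases exL with
      | true => exact Or.inl rfl
      | false =>
        refine Or.inr ⟨?_, Or.inl rfl⟩
        intro hhd
        have hm : (some (some false) : Option EdgeState) =
            (es ++ [some exR]).head? := by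
          rw [List.head?_append_of_ne_nil _ hne]
          exact hhd.symm
        have := hh (some false) (by rw [Option.mem_def]; exact hm.symm)
        simp only [Bool.not_false] at this
        exact this ⟨rfl, rfl⟩
    · cases exR with
      | true => exact Or.inl rfl
      | false =>
        refine Or.inr ⟨?_, Or.inl rfl⟩
        intro hlst
        exact (NS_right_false_iff.1 (hlast (some true) hlst)) rfl

lemma moves_eq {exL exR : Bool} (es : List EdgeState) (hne : es ≠ []) :
    chainMoves (some (!exL) :: (es ++ [some exR])) =
      (fun es' => some (!exL) :: (es' ++ [some exR])) '' lineMoves true exL exR es := by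
  ext c'
  simp only [chainMoves, lineMoves, Set.mem_setOf_eq, Set.mem_image]
  constructor
  · rintro ⟨j, d, hget, rfl, hOK⟩
    cases j with
    | zero => simp at hget
    | succ j =>
      have hget1 : (es ++ [some exR])[j]? = some none := hget
      have hjlt : j < es.length := by
        rcases Nat.lt_or_ge j es.length with h | h
        · exact h
        · rw [getq_append_ge h] at hget1
          rcases Nat.lt_or_ge (j - es.length) 1 with h2 | h2
          · rw [show j - es.length = 0 from by omega] at hget1
            simp at hget1
          · rw [show j - es.length = (j - es.length - 1) + 1 from by omega] at hget1
            simp at hget1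
      have hget2 : es[j]? = some none := by
        rw [getq_append_lt hjlt] at hget1
        exact hget1
      have hset : (some (!exL) :: (es ++ [some exR])).set (j+1) (some d)
          = some (!exL) :: (es.set j (some d) ++ [some exR]) := by
        show some (!exL) :: (es ++ [some exR]).set j (some d) = _
        rw [set_append_lt _ hjlt]
      rw [hset] at hOK ⊢
      have hsne : es.set j (some d) ≠ [] := by
        intro h
        have := congrArg List.length h
        simp at this
        rw [this] at hjlt
        exact Nat.not_lt_zero j hjlt
      exact ⟨es.set j (some d), ⟨j, d, hget2, rfl, (LK hsne).2 hOK⟩, rfl⟩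
  · rintro ⟨es', ⟨j, d, hget, rfl, hLOK⟩, rfl⟩
    have hjlt : j < es.length := getq_some_lt es j none hget
    refine ⟨j + 1, d, ?_, ?_, ?_⟩
    · show (es ++ [some exR])[j]? = some none
      rw [getq_append_lt hjlt]
      exact hget
    · show _ = (some (!exL) :: (es ++ [some exR]).set j (some d))
      rw [set_append_lt _ hjlt]
    · have hsne : es.set j (some d) ≠ [] := by
        intro h
        have := congrArg List.length h
        simp at this
        rw [this] at hjlt
        exact Nat.not_lt_zero j hjlt
      exact (LK hsne).1 hLOK

-- final bridge ------------------------------------------------------------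

lemma chain_cons_repl {x : EdgeState} {l : List EdgeState} {n : ℕ} (hn : 1 ≤ n)
    (h : List.Chain' NS l) : List.Chain' NS (x :: (List.replicate n none ++ l)) := by
  apply chain_cons_of (chain_repl_append n h)
  intro y hy
  rw [Option.mem_def, head_repl_append, if_neg (by omega)] at hy
  rw [show y = none from by simpa using hy.symm]
  exact NS_right_none

lemma chain_pair_true (x : EdgeState) : List.Chain' NS [x, some true] :=
  List.isChain_pair.2 NS_right_true

lemma chain_init (l r : Option Bool) (n : ℕ) (hn : 1 ≤ n) :
    List.Chain' NS (some (!l.isSome) ::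
      (((l.map some).toList ++ (List.replicate n none ++
        ((r.map some).toList ++ [some r.isSome]))) : List EdgeState)) := by
  cases l with
  | none =>
    cases r with
    | none =>
      show List.Chain' NS (some true :: (List.replicate n none ++ [some false]))
      exact chain_cons_repl hn (List.isChain_singleton _)
    | some b =>
      show List.Chain' NS (some true ::
        (List.replicate n none ++ [some b, some true]))
      exact chain_cons_repl hn (chain_pair_true _)
  | some a =>
    cases r with
    | none =>
      show List.Chain' NS (some false :: some a ::
        (List.replicate n none ++ [some false]))
      exact chain_cons_of (chain_cons_repl hn (List.isChain_singleton _))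
        (fun y _ => NS_left_false)
    | some b =>
      show List.Chain' NS (some false :: some a ::
        (List.replicate n none ++ [some b, some true]))
      exact chain_cons_of (chain_cons_repl hn (chain_pair_true _))
        (fun y _ => NS_left_false)

lemma count_none_init (l r : Option Bool) (n : ℕ) :
    ((((l.map some).toList ++ List.replicate n none ++ (r.map some).toList)
      ++ [some r.isSome]) : List EdgeState).count none = n := by
  cases l <;> cases r <;>
    simp [List.count_append, List.count_cons, List.count_replicate]

lemma bridge (l r : Option Bool) (n : ℕ) (hn : 1 ≤ n) :
    lineNim true l r n = val (l.getD true) (r.getD false) n := by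
  show grundyAux (lineMoves true l.isSome r.isSome) _ _ = _
  set es0 : List EdgeState :=
    (l.map some).toList ++ List.replicate n none ++ (r.map some).toList with hes0
  have hes0ne : es0 ≠ [] := by
    intro h
    have := congrArg List.length h
    simp [hes0] at this
    omega
  have hmap := grundy_map' (lineMoves true l.isSome r.isSome) chainMoves
    (fun es' => some (!l.isSome) :: (es' ++ [some r.isSome]))
    (fun es' => es' ≠ [])
    (fun x hx => moves_eq x hx)
    (fun x y hx hy => by
      obtain ⟨j, d, hget, rfl, -⟩ := hy
      intro h
      have := congrArg List.length h
      simp at this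
      rw [this] at hget
      simp at hget)
    es0.length es0 hes0ne
  rw [← hmap]
  have hLM : LM (es0 ++ [some r.isSome]) := Or.inr ⟨es0, r.isSome, rfl⟩
  have hch : List.Chain' NS (some (!l.isSome) :: (es0 ++ [some r.isSome])) := by
    have := chain_init l r n hn
    rw [hes0, List.append_assoc, List.append_assoc]
    exact this
  have hcount : (es0 ++ [some r.isSome]).count none ≤ es0.length := by
    rw [hes0, count_none_init l r n]
    simp [hes0]
    omega
  rw [chain_grundy es0.length (es0 ++ [some r.isSome]) (!l.isSome) hcount hLM hch]
  -- now compute cv'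
  rw [hes0]
  cases l with
  | none =>
    cases r with
    | none =>
      have heq : ((((Option.map some none).toList : List EdgeState) ++
          List.replicate n none ++ (Option.map some none).toList) ++ [some (none : Option Bool).isSome])
          = List.replicate n none ++ some false :: [] := by simp
      rw [heq, show (!(none : Option Bool).isSome) = true from rfl, cv'_seg]
      show val true false n ^^^ 0 = val ((none : Option Bool).getD true) ((none : Option Bool).getD false) n
      rw [Nat.xor_zero]
      rfl
    | some b =>
      have heq : ((((Option.map some none).toList : List EdgeState) ++
          List.replicate n none ++ (Option.map some (some b)).toList) ++ [some (some b).isSome])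
          = List.replicate n none ++ some b :: [some true] := by simp
      rw [heq, show (!(none : Option Bool).isSome) = true from rfl, cv'_seg]
      show val true b n ^^^ (val b true 0 ^^^ 0) = val ((none : Option Bool).getD true) ((some b).getD false) n
      rw [val_zero]
      show val true b n ^^^ 0 = val true b n
      rw [Nat.xor_zero]
  | some a =>
    cases r with
    | none =>
      have heq : ((((Option.map some (some a)).toList : List EdgeState) ++
          List.replicate n none ++ (Option.map some none).toList) ++ [some (none : Option Bool).isSome])
          = some a :: (List.replicate n none ++ some false :: []) := by simp
      rw [heq]
      show val (!(some a).isSome) a 0 ^^^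
        cv' a (List.replicate n none ++ some false :: []) = _
      rw [val_zero, Nat.zero_xor, cv'_seg]
      show val a false n ^^^ 0 = val ((some a).getD true) ((none : Option Bool).getD false) n
      rw [Nat.xor_zero]
      rfl
    | some b =>
      have heq : ((((Option.map some (some a)).toList : List EdgeState) ++
          List.replicate n none ++ (Option.map some (some b)).toList) ++ [some (some b).isSome])
          = some a :: (List.replicate n none ++ some b :: [some true]) := by simp
      rw [heq]
      show val (!(some a).isSome) a 0 ^^^
        cv' a (List.replicate n none ++ some b :: [some true]) = _
      rw [val_zero, Nat.zero_xor, cv'_seg]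
      show val a b n ^^^ (val b true 0 ^^^ 0) = val ((some a).getD true) ((some b).getD false) n
      rw [val_zero]
      show val a b n ^^^ 0 = val a b n
      rw [Nat.xor_zero]

/-- For each of the six line sub-game types of Cycles with Sources
and every `n ≥ 27`, the Grundy value of the type-`i` game with `n + 17` unmarked
edges equals the Grundy value of the type-`i` game with `n` unmarked edges. -/
theorem cws_line_types_periodic (i : Fin 6) (n : ℕ) (hn : 27 ≤ n) :
    lineNim true (typeEnds i).1 (typeEnds i).2 (n + 17) =
      lineNim true (typeEnds i).1 (typeEnds i).2 n := by
  have key : ∀ l r : Option Bool,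
      lineNim true l r (n + 17) = lineNim true l r n := by
    intro l r
    rw [bridge l r (n + 17) (by omega), bridge l r n (by omega),
      val_periodic n hn]
  exact key _ _
end

section
/- In the standard Game of Cycles, consider the line game obtained by cutting a cycle along a marked edge: a path of n unmarked edges with pre-marked directed edges at both ends, both pointing in the same direction along the path (•→•—•⋯•—•→•), where the two boundary nodes at the far ends (the endpoints of the pre-marked edges not on the path) are entirely exempt from the no-source/no-sink restriction. For every n ≥ 1, this game has Grundy value 1 if n is odd and 0 if n is even. -/
-- Auxiliary development

-- auxiliary development

def Leg (es : List EdgeState) : Prop :=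
  (∀ j : ℕ, ¬ (es[j]? = some (some true) ∧ es[(j+1)]? = some (some false))) ∧
  (∀ j : ℕ, ¬ (es[j]? = some (some false) ∧ es[(j+1)]? = some (some true)))

lemma lineOK_iff (es : List EdgeState) : LineOK false true true es ↔ Leg es := by
  unfold LineOK Leg; simp

def flips : List Bool → ℕ
  | a :: b :: t => (if a = b then 0 else 1) + flips (b :: t)
  | _ => 0

def fval (es : List EdgeState) : ℕ := (es.count none + flips (es.filterMap id)) % 2

lemma addmod (a b c : ℕ) (h : a % 2 = b % 2) : (a + c) % 2 = (b + c) % 2 := by omega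

lemma flips_insert (u : List Bool) (hu : u ≠ []) (v : List Bool) (hv : v ≠ []) (d : Bool) :
    flips (u ++ d :: v) % 2 = flips (u ++ v) % 2 := by
  induction u with
  | nil => exact absurd rfl hu
  | cons a u ih =>
    cases u with
    | nil =>
      obtain ⟨b, t, rfl⟩ : ∃ b t, v = b :: t := by
        cases v with
        | nil => exact absurd rfl hv
        | cons b t => exact ⟨b, t, rfl⟩
      show flips (a :: d :: b :: t) % 2 = flips (a :: b :: t) % 2
      have hch : ∀ x y z : Bool,
          ((if x = y then 0 else 1) + (if y = z then 0 else 1)) % 2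
            = (if x = z then (0:ℕ) else 1) % 2 := by decide
      simp only [flips]
      rw [← Nat.add_assoc]
      exact addmod _ _ _ (hch a d b)
    | cons c u' =>
      have h := ih (by simp)
      show flips (a :: c :: (u' ++ d :: v)) % 2 = flips (a :: c :: (u' ++ v)) % 2
      simp only [flips]
      rw [Nat.add_comm (if a = c then 0 else 1), Nat.add_comm (if a = c then 0 else 1)]
      exact addmod _ _ _ h

lemma fval_set {es : List EdgeState} {j : ℕ} (hj : es[j]? = some none)
    (hh : ∃ a, es.head? = some (some a)) (hl : ∃ b, es.getLast? = some (some b)) (d : Bool) :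
    fval (es.set j (some d)) = 1 - fval es ∧
      (es.set j (some d)).count none + 1 = es.count none := by
  obtain ⟨a, ha⟩ := hh
  obtain ⟨b, hb⟩ := hl
  obtain ⟨hjlen, hget⟩ := List.getElem?_eq_some_iff.mp hj
  have hne : es ≠ [] := by rintro rfl; simp at ha
  have h0 : es[0]? = some (some a) := by
    rwa [← List.head?_eq_getElem?]
  have hj0 : j ≠ 0 := by rintro rfl; rw [hj] at h0; simp at h0
  have hlast : es[(es.length - 1)]? = some (some b) := by
    rwa [← List.getLast?_eq_getElem?]
  have hjlast : j ≠ es.length - 1 := by rintro rfl; rw [hj] at hlast; simp at hlast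
  have hjlt : j + 1 ≤ es.length - 1 := by omega
  set t := es.take j with ht
  set s := es.drop (j+1) with hs
  have hes : t ++ none :: s = es := by
    have h1 := List.take_append_drop j es
    rw [List.drop_eq_getElem_cons hjlen, hget] at h1
    exact h1
  have hset : es.set j (some d) = t ++ some d :: s := by
    rw [List.set_eq_take_append_cons_drop, if_pos hjlen]
  -- marks of t nonempty
  have htm : t.filterMap id ≠ [] := by
    have : t[0]? = some (some a) := by
      rw [ht, List.getElem?_take_of_lt (by omega)]; exact h0
    have hmem : (some a : EdgeState) ∈ t := List.mem_of_getElem? this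
    have : a ∈ t.filterMap id := List.mem_filterMap.mpr ⟨some a, hmem, rfl⟩
    exact List.ne_nil_of_mem this
  have hsm : s.filterMap id ≠ [] := by
    have : s[es.length - 1 - (j+1)]? = some (some b) := by
      rw [hs, List.getElem?_drop]
      have : j + 1 + (es.length - 1 - (j + 1)) = es.length - 1 := by omega
      rw [this]; exact hlast
    have hmem : (some b : EdgeState) ∈ s := List.mem_of_getElem? this
    have : b ∈ s.filterMap id := List.mem_filterMap.mpr ⟨some b, hmem, rfl⟩
    exact List.ne_nil_of_mem this
  have hcount : es.count none = t.count none + 1 + s.count none := by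
    rw [← hes]; simp [List.count_append, List.count_cons]; omega
  have hcount' : (es.set j (some d)).count none = t.count none + s.count none := by
    rw [hset]; simp [List.count_append, List.count_cons]
  have hmarks : es.filterMap id = t.filterMap id ++ s.filterMap id := by
    rw [← hes]; simp [List.filterMap_append]
  have hmarks' : (es.set j (some d)).filterMap id
      = t.filterMap id ++ d :: s.filterMap id := by
    rw [hset]; simp [List.filterMap_append]
  have hflip := flips_insert _ htm _ hsm d
  constructor
  · unfold fval
    rw [hcount, hcount', hmarks, hmarks']
    generalize flips (t.filterMap id ++ d :: s.filterMap id) = F1 at hflip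
    generalize flips (t.filterMap id ++ s.filterMap id) = F2 at hflip
    omega
  · omega

def Tc (es : List EdgeState) : Prop := ∀ j : ℕ, es[(j+1)]? = some none →
  (es[j]? = some (some true) ∧ es[(j+2)]? = some (some false)) ∨
  (es[j]? = some (some false) ∧ es[(j+2)]? = some (some true))

lemma Leg_tail {x : EdgeState} {es : List EdgeState} (h : Leg (x :: es)) : Leg es :=
  ⟨fun j => h.1 (j+1), fun j => h.2 (j+1)⟩

lemma Tc_tail {x : EdgeState} {es : List EdgeState} (h : Tc (x :: es)) : Tc es :=
  fun j hj => h (j+1) hj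

lemma parity_aux (n : ℕ) : ∀ es : List EdgeState, es.length = n → Leg es →
    (∃ a, es.head? = some (some a)) → Tc es →
    flips (es.filterMap id) % 2 = es.count none % 2 := by
  induction n using Nat.strong_induction_on with
  | _ n ih =>
  intro es hn hleg hh htc
  subst hn
  obtain ⟨a, ha⟩ := hh
  match es with
  | [] => simp at ha
  | x :: es' =>
    have hx : x = some a := by simpa using ha
    subst hx
    match es' with
    | [] => simp [flips]
    | none :: rest =>
      have h0 := htc 0 (by simp)
      obtain ⟨c, c', hc, hc', hne⟩ :
          ∃ c c', (some a :: none :: rest : List EdgeState)[0]? = some (some c) ∧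
            (some a :: none :: rest : List EdgeState)[2]? = some (some c') ∧ c ≠ c' := by
        rcases h0 with ⟨h1, h2⟩ | ⟨h1, h2⟩
        · exact ⟨true, false, h1, h2, by simp⟩
        · exact ⟨false, true, h1, h2, by simp⟩
      have hca : a = c := by simpa using hc
      subst hca
      cases rest with
      | nil => simp at hc'
      | cons y rest' =>
        have hy : y = some c' := by simpa using hc'
        subst hy
        have ihh := ih (some c' :: rest').length (by simp) (some c' :: rest') rfl
          (Leg_tail (Leg_tail hleg)) ⟨c', by simp⟩ (Tc_tail (Tc_tail htc))
        simp only [List.filterMap_cons, List.count_cons] at *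
        try simp only [id] at *
        show flips (a :: c' :: List.filterMap id rest') % 2 = _
        simp only [flips, if_neg hne]
        have e1 : ((some c' : EdgeState) == none) = false := rfl
        have e2 : ((none : EdgeState) == none) = true := rfl
        have e3 : ((some a : EdgeState) == none) = false := rfl
        simp [e1, e2, e3] at ihh ⊢
        omega
    | some b :: rest =>
      have hab : a = b := by
        by_contra hne
        rcases a <;> rcases b <;> simp at hne
        · exact hleg.2 0 (by simp)
        · exact hleg.1 0 (by simp)
      subst hab
      have ihh := ih (some a :: rest).length (by simp) (some a :: rest) rfl
        (Leg_tail hleg) ⟨a, by simp⟩ (Tc_tail htc)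
      simp only [List.filterMap_cons, List.count_cons] at *
      try simp only [id] at *
      show flips (a :: a :: List.filterMap id rest) % 2 = _
      simp only [flips, if_pos rfl]
      have e1 : ((some a : EdgeState) == none) = false := rfl
      simp [e1] at ihh ⊢
      omega

lemma no_moves_Tc {es : List EdgeState} (hleg : Leg es)
    (hnm : ∀ es', es' ∉ lineMoves false true true es) : Tc es := by
  intro j hj
  have hfail : ∀ d : Bool, ¬ Leg (es.set (j+1) (some d)) := by
    intro d hOK
    exact hnm _ ⟨j+1, d, hj, rfl, (lineOK_iff _).mpr hOK⟩
  have hset : ∀ d : Bool, (es.set (j+1) (some d))[(j+1)]? = some (some d) := by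
    intro d
    rw [List.getElem?_set_self', hj]
    rfl
  have hset' : ∀ (d : Bool) (i : ℕ), i ≠ j+1 → (es.set (j+1) (some d))[i]? = es[i]? :=
    fun d i hi => List.getElem?_set_ne (fun h => hi h.symm)
  have hloc : ∀ d : Bool, es[j]? = some (some (!d)) ∨ es[(j+2)]? = some (some (!d)) := by
    intro d
    by_contra hc
    push_neg at hc
    apply hfail d
    constructor <;> intro i <;> rintro ⟨h1, h2⟩
    · rcases eq_or_ne i (j+1) with hi0 | hi
      · rw [hi0, hset] at h1
        have hd : d = true := by simpa using h1
        rw [hset' d (i+1) (by omega)] at h2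
        apply hc.2
        have : i + 1 = j + 2 := by omega
        rw [← this, h2, hd]; rfl
      · rcases eq_or_ne (i+1) (j+1) with he | hi'
        · rw [he, hset] at h2
          have hd : d = false := by simpa using h2
          rw [hset' d i (by omega)] at h1
          apply hc.1
          have : i = j := by omega
          rw [← this, h1, hd]; rfl
        · rw [hset' d i hi] at h1
          rw [hset' d (i+1) hi'] at h2
          exact hleg.1 i ⟨h1, h2⟩
    · rcases eq_or_ne i (j+1) with hi0 | hi
      · rw [hi0, hset] at h1
        have hd : d = false := by simpa using h1
        rw [hset' d (i+1) (by omega)] at h2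
        apply hc.2
        have : i + 1 = j + 2 := by omega
        rw [← this, h2, hd]; rfl
      · rcases eq_or_ne (i+1) (j+1) with he | hi'
        · rw [he, hset] at h2
          have hd : d = true := by simpa using h2
          rw [hset' d i (by omega)] at h1
          apply hc.1
          have : i = j := by omega
          rw [← this, h1, hd]; rfl
        · rw [hset' d i hi] at h1
          rw [hset' d (i+1) hi'] at h2
          exact hleg.2 i ⟨h1, h2⟩
  rcases hloc true with h1 | h1 <;> rcases hloc false with h2 | h2
  · rw [h1] at h2; simp at h2
  · exact Or.inr ⟨by simpa using h1, by simpa using h2⟩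
  · exact Or.inl ⟨by simpa using h2, by simpa using h1⟩
  · rw [h1] at h2; simp at h2

lemma mex_zero {S : Set ℕ} (h : 0 ∉ S) : mex S = 0 :=
  Nat.sInf_eq_zero.mpr (Or.inl h)

lemma mex_one {S : Set ℕ} (h0 : 0 ∈ S) (h1 : 1 ∉ S) : mex S = 1 := by
  unfold mex
  refine le_antisymm (Nat.sInf_le h1) ?_
  rcases Nat.eq_zero_or_pos (sInf {n | n ∉ S}) with hz | hp
  · exfalso
    rcases Nat.sInf_eq_zero.mp hz with hm | he
    · exact hm h0
    · have h1' : (1:ℕ) ∈ {n | n ∉ S} := h1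
      rw [he] at h1'
      exact h1'
  · exact hp

lemma fval_le_one (es : List EdgeState) : fval es ≤ 1 :=
  Nat.le_of_lt_succ (Nat.mod_lt _ (by norm_num))

lemma fval_zero_of_terminal {es : List EdgeState} (hleg : Leg es)
    (hh : ∃ a, es.head? = some (some a))
    (hnm : ∀ es', es' ∉ lineMoves false true true es) : fval es = 0 := by
  have h := parity_aux es.length es rfl hleg hh (no_moves_Tc hleg hnm)
  unfold fval
  omega

lemma grundy_main (fuel : ℕ) : ∀ es : List EdgeState, Leg es →
    (∃ a, es.head? = some (some a)) → (∃ b, es.getLast? = some (some b)) →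
    es.count none ≤ fuel →
    grundyAux (lineMoves false true true) fuel es = fval es := by
  induction fuel with
  | zero =>
    intro es hleg hh hl hc
    have hc0 : es.count none = 0 := Nat.le_zero.mp hc
    have hnm : ∀ es', es' ∉ lineMoves false true true es := by
      rintro es' ⟨j, d, hj, -, -⟩
      have : (none : EdgeState) ∈ es := List.mem_of_getElem? hj
      have := List.count_pos_iff.mpr this
      omega
    have := fval_zero_of_terminal hleg hh hnm
    simp [grundyAux, this]
  | succ k ih =>
    intro es hleg hh hl hc
    have hmkey : ∀ es' ∈ lineMoves false true true es,
        grundyAux (lineMoves false true true) k es' = 1 - fval es := by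
      rintro es' ⟨j, d, hj, rfl, hOK⟩
      have hleg' : Leg (es.set j (some d)) := (lineOK_iff _).mp hOK
      obtain ⟨a, ha⟩ := hh
      obtain ⟨b, hb⟩ := hl
      have hne : es ≠ [] := by rintro rfl; simp at ha
      have h0 : es[0]? = some (some a) := by rwa [← List.head?_eq_getElem?]
      have hj0 : j ≠ 0 := by rintro rfl; rw [hj] at h0; simp at h0
      have hlast : es[(es.length - 1)]? = some (some b) := by
        rwa [← List.getLast?_eq_getElem?]
      have hjlast : j ≠ es.length - 1 := by rintro rfl; rw [hj] at hlast; simp at hlast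
      have hh' : ∃ a, (es.set j (some d)).head? = some (some a) := by
        refine ⟨a, ?_⟩
        rw [List.head?_eq_getElem?] at ha ⊢
        rwa [List.getElem?_set_ne hj0]
      have hl' : ∃ b, (es.set j (some d)).getLast? = some (some b) := by
        refine ⟨b, ?_⟩
        rw [List.getLast?_eq_getElem?, List.length_set]
        rwa [List.getElem?_set_ne hjlast]
      obtain ⟨hfv, hcnt⟩ := fval_set hj ⟨a, ha⟩ ⟨b, hb⟩ d
      rw [ih _ hleg' hh' hl' (by omega), hfv]
    have hgr : grundyAux (lineMoves false true true) (k+1) es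
        = mex ((grundyAux (lineMoves false true true) k) '' (lineMoves false true true es)) := rfl
    rcases Nat.lt_or_ge (fval es) 1 with h0 | h1
    · -- fval es = 0 : show mex = 0, i.e. 0 not in image
      have hf0 : fval es = 0 := by omega
      rw [hgr, hf0]
      apply mex_zero
      rintro ⟨es', hm, hval⟩
      rw [hmkey es' hm, hf0] at hval
      simp at hval
    · have hf1 : fval es = 1 := le_antisymm (fval_le_one es) h1
      -- there is a move
      have hex : ∃ es', es' ∈ lineMoves false true true es := by
        by_contra hno
        push_neg at hno
        have := fval_zero_of_terminal hleg hh hno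
        omega
      obtain ⟨es', hm⟩ := hex
      rw [hgr, hf1]
      apply mex_one
      · refine ⟨es', hm, ?_⟩
        rw [hmkey es' hm, hf1]
      · rintro ⟨es'', hm'', hval⟩
        rw [hmkey es'' hm'', hf1] at hval
        simp at hval

/-- Cutting a cycle along a marked edge in the standard Game of
Cycles yields a path of `n` unmarked edges with pre-marked directed edges at both
ends, both pointing in the same direction along the path (•→•—•⋯•—•→•), the two
far-end boundary nodes being exempt from the no-source/no-sink rule. For every
`n ≥ 1` this game has Grundy value `1` if `n` is odd and `0` if `n` is even. -/
theorem cut_cycle_type1_nimber_standard (n : ℕ) (hn : 1 ≤ n) :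
    lineNim false (some true) (some true) n = if Odd n then 1 else 0 := by
  have hes : ((some true : Option Bool).map some).toList ++ List.replicate n (none : EdgeState)
      ++ ((some true : Option Bool).map some).toList
      = some true :: (List.replicate n (none : EdgeState) ++ [some true]) := by
    simp
  unfold lineNim
  simp only [Option.isSome_some, hes]
  set es : List EdgeState := some true :: (List.replicate n none ++ [some true]) with hesdef
  have hmem : ∀ x : EdgeState, x ∈ es → x = some true ∨ x = none := by
    intro x hx
    rw [hesdef] at hx
    rcases List.mem_cons.mp hx with h | h
    · exact Or.inl h
    rcases List.mem_append.mp h with h | h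
    · exact Or.inr (List.eq_of_mem_replicate h)
    · exact Or.inl (List.mem_singleton.mp h)
  have hleg : Leg es := by
    constructor <;> intro j <;> rintro ⟨h1, h2⟩
    · rcases hmem _ (List.mem_of_getElem? h2) with h | h <;> simp at h
    · rcases hmem _ (List.mem_of_getElem? h1) with h | h <;> simp at h
  have hh : ∃ a, es.head? = some (some a) := ⟨true, by rw [hesdef]; rfl⟩
  have hl : ∃ b, es.getLast? = some (some b) := by
    refine ⟨true, ?_⟩
    rw [hesdef, ← List.cons_append]
    exact List.getLast?_concat
  have hrep : ∀ m : ℕ, (List.replicate m (none : EdgeState)).filterMap id = [] := by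
    intro m
    induction m with
    | zero => rfl
    | succ m ihm => simp [List.replicate_succ, ihm]
  have hcount : es.count none = n := by
    rw [hesdef]
    simp [List.count_cons, List.count_append, List.count_replicate]
  have hfv : fval es = n % 2 := by
    unfold fval
    have hmarks : es.filterMap id = [true, true] := by
      rw [hesdef]
      simp [List.filterMap_append, hrep]
    rw [hmarks, hcount]
    simp [flips]
  have hlen : es.length = n + 2 := by rw [hesdef]; simp
  rw [grundy_main es.length es hleg hh hl (by omega), hfv]
  rcases Nat.even_or_odd n with he | ho
  · rw [if_neg (by simpa using he), Nat.even_iff.mp he]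
  · rw [if_pos ho, Nat.odd_iff.mp ho]
end
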